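/- arXiv:0707.0734 — 3 statements merged into one kernel-verified Lean document; each statement's English description precedes it below -/
import Mathlib

section
/- Suppose the sequence (p_i) is strictly positive, nonincreasing, and converges to 0. Then there exists an absolute constant C > 0 such that for all sufficiently large m, D(m,∞) ≥ C/p_m; consequently lim_{m→∞} D(m,∞) = +∞. -/
open MeasureTheory Filter Finset
open scoped ENNReal NNReal Topology

noncomputable section

namespace NNRW

/-- Probability of a step to the right from site `i`: `E 0 = 1`, `E i = 1/2 + p i` for `i ≥ 1`. -/
def E (p : ℕ → ℝ) (i : ℕ) : ℝ := if i = 0 then 1 else 1 / 2 + p i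

/-- One-step transition probability of the nearest-neighbour walk, from `i` to `j`. -/
def step (p : ℕ → ℝ) (i j : ℕ) : ℝ :=
  if j = i + 1 then E p i else if j + 1 = i then 1 - E p i else 0

/-- `X` is (distributed as) the nearest-neighbour Markov chain with parameters `p`, started
at `b`, under the probability measure `P`: `X 0 = b` and the finite-dimensional
distributions are the products of the one-step transition probabilities. -/
def IsNNWalk {Ω : Type*} [MeasurableSpace Ω] (P : Measure Ω)
    (X : ℕ → Ω → ℕ) (p : ℕ → ℝ) (b : ℕ) : Prop :=
  (∀ ω, X 0 ω = b) ∧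
    ∀ (n : ℕ) (u : ℕ → ℕ), u 0 = b →
      P {ω | ∀ k ≤ n, X k ω = u k} =
        ENNReal.ofReal (∏ k ∈ Finset.range n, step p (u k) (u (k + 1)))

/-- `U i = (1/2 - p i)/(1/2 + p i)`. -/
def U (p : ℕ → ℝ) (i : ℕ) : ℝ := (1 / 2 - p i) / (1 / 2 + p i)

/-- `D(m,n)` for finite `m ≤ n`. -/
def Dfin (p : ℕ → ℝ) (m n : ℕ) : ℝ :=
  if n = m then 0
  else 1 + ∑ j ∈ Finset.Icc 1 (n - m - 1), ∏ i ∈ Finset.Icc 1 j, U p (m + i)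

/-- `D(m,∞) = lim_{n → ∞} D(m,n) ∈ (0,∞]`. -/
def Dinf (p : ℕ → ℝ) (m : ℕ) : ℝ≥0∞ :=
  1 + ∑' j : ℕ, ENNReal.ofReal (∏ i ∈ Finset.Icc 1 (j + 1), U p (m + i))

/-- Event: the walk visits `a` (strictly) before it ever visits `c`. -/
def hitsBefore {Ω : Type*} (X : ℕ → Ω → ℕ) (a c : ℕ) : Set Ω :=
  {ω | ∃ n, X n ω = a ∧ ∀ k < n, X k ω ≠ c}

/-- Event: the walk ever visits `a`. -/
def hits {Ω : Type*} (X : ℕ → Ω → ℕ) (a : ℕ) : Set Ω := {ω | ∃ n, X n ω = a}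

/-- Total local time `ξ(x,∞)` at site `x` (equal to `∞` if there are infinitely many
visits). -/
def localTime {Ω : Type*} (X : ℕ → Ω → ℕ) (x : ℕ) (ω : Ω) : ℝ≥0∞ :=
  ∑' k : ℕ, Set.indicator {k | X k ω = x} (fun _ => (1 : ℝ≥0∞)) k

/-- Total number of upcrossings `ξ(x,∞,↑)` at site `x`. -/
def upcross {Ω : Type*} (X : ℕ → Ω → ℕ) (x : ℕ) (ω : Ω) : ℝ≥0∞ :=
  ∑' k : ℕ, Set.indicator {k | X k ω = x ∧ X (k + 1) ω = x + 1} (fun _ => (1 : ℝ≥0∞)) k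

/-- Iterated logarithm: `iterLog 0 x = x`, `iterLog (k+1) x = log (iterLog k x)`. -/
def iterLog : ℕ → ℝ → ℝ
  | 0, x => x
  | k + 1, x => Real.log (iterLog k x)

/-- `λ(k,x)`: `lam 0 x = 1`, `lam (k+1) x = lam k x * log_k x`. -/
def lam : ℕ → ℝ → ℝ
  | 0, _ => 1
  | k + 1, x => lam k x * iterLog k x

/-- `Λ(K,x,B) = Λ(K-1,x) + B/λ(K,x)` where `Λ(K,x) = ∑_{k=1}^{K} 1/λ(k,x)`. -/
def LamB (K : ℕ) (B : ℝ) (x : ℝ) : ℝ :=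
  (∑ k ∈ Finset.Icc 1 (K - 1), 1 / lam k x) + B / lam K x

/-- The truncation convention: with `i₀ = min{i ≥ 1 : q i < 1/2}` one has `p i = q i₀`
for `1 ≤ i ≤ i₀` and `p i = q i` for `i > i₀`. -/
def IsTruncation (q p : ℕ → ℝ) : Prop :=
  ∃ i0 : ℕ, 1 ≤ i0 ∧ q i0 < 1 / 2 ∧ (∀ i, 1 ≤ i → i < i0 → ¬ q i < 1 / 2) ∧
    (∀ i, 1 ≤ i → i ≤ i0 → p i = q i0) ∧ ∀ i, i0 < i → p i = q i

end NNRW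

open NNRW
/-- if `(p_i)` is strictly positive, nonincreasing and tends to `0`, then
there is an absolute constant `C > 0` with `D(m,∞) ≥ C/p_m` for all large `m`;
consequently `D(m,∞) → ∞`. -/
theorem stmt0 (p : ℕ → ℝ)
    (hp : ∀ i, 1 ≤ i → 0 < p i ∧ p i < 1 / 2)
    (hmono : ∀ i j, 1 ≤ i → i ≤ j → p j ≤ p i)
    (hlim : Tendsto p atTop (𝓝 0)) :
    (∃ C : ℝ, 0 < C ∧ ∀ᶠ m : ℕ in atTop, ENNReal.ofReal (C / p m) ≤ Dinf p m) ∧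
      Tendsto (fun m : ℕ => Dinf p m) atTop (𝓝 ⊤) := by
  have hUnn : ∀ i, 1 ≤ i → 0 ≤ U p i := by
    intro i hi
    obtain ⟨h1, h2⟩ := hp i hi
    exact div_nonneg (by linarith) (by linarith)
  have hkey : ∀ m, 1 ≤ m → ENNReal.ofReal (4⁻¹ / p m) ≤ Dinf p m := by
    intro m hm
    obtain ⟨hpm1, hpm2⟩ := hp m hm
    obtain ⟨hpa1, hpa2⟩ := hp (m + 1) (by omega)
    have ham : p (m + 1) ≤ p m := hmono m (m + 1) hm (by omega)
    set u := U p (m + 1) with hu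
    have hu0 : 0 ≤ u := hUnn (m + 1) (by omega)
    have hmul : (1 / 2 + p (m + 1)) * u = 1 / 2 - p (m + 1) := by
      rw [hu, U]; field_simp
    have hu1 : u < 1 := by nlinarith
    -- each factor is at least u
    have hfac : ∀ i, 1 ≤ i → u ≤ U p (m + i) := by
      intro i hi
      have hple : p (m + i) ≤ p (m + 1) := hmono (m + 1) (m + i) (by omega) (by omega)
      obtain ⟨hq1, hq2⟩ := hp (m + i) (by omega)
      rw [hu, U, U, div_le_div_iff₀ (by linarith) (by linarith)]
      nlinarith
    have hprod : ∀ j : ℕ, (ENNReal.ofReal u) ^ (j + 1) ≤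
        ENNReal.ofReal (∏ i ∈ Finset.Icc 1 (j + 1), U p (m + i)) := by
      intro j
      rw [← ENNReal.ofReal_pow hu0]
      apply ENNReal.ofReal_le_ofReal
      calc u ^ (j + 1) = ∏ _i ∈ Finset.Icc 1 (j + 1), u := by
            rw [Finset.prod_const, Nat.card_Icc]; norm_num
          _ ≤ ∏ i ∈ Finset.Icc 1 (j + 1), U p (m + i) :=
            Finset.prod_le_prod (fun i _ => hu0)
              (fun i hi => hfac i (Finset.mem_Icc.mp hi).1)
    have hsum : (∑' n : ℕ, (ENNReal.ofReal u) ^ n) ≤ Dinf p m := by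
      rw [tsum_eq_zero_add' ENNReal.summable, pow_zero, Dinf]
      exact add_le_add le_rfl (ENNReal.tsum_le_tsum hprod)
    refine le_trans ?_ hsum
    rw [ENNReal.tsum_geometric]
    have h1u : 0 < 1 - u := by linarith
    have hsub : (1 : ℝ≥0∞) - ENNReal.ofReal u = ENNReal.ofReal (1 - u) := by
      rw [ENNReal.ofReal_sub 1 hu0, ENNReal.ofReal_one]
    rw [hsub, ← ENNReal.ofReal_inv_of_pos h1u]
    apply ENNReal.ofReal_le_ofReal
    have h4 : 1 - u ≤ 4 * p m := by nlinarith
    rw [show (1-u)⁻¹ = 1/(1-u) from inv_eq_one_div _, div_le_div_iff₀ hpm1 h1u]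
    linarith
  constructor
  · exact ⟨4⁻¹, by norm_num, by
      filter_upwards [eventually_ge_atTop 1] with m hm using hkey m hm⟩
  · have hp' : Tendsto p atTop (𝓝[>] 0) := by
      rw [tendsto_nhdsWithin_iff]
      exact ⟨hlim, by filter_upwards [eventually_ge_atTop 1] with m hm using (hp m hm).1⟩
    have h2 : Tendsto (fun m => 4⁻¹ / p m) atTop atTop := by
      simp only [div_eq_mul_inv]
      exact (hp'.inv_tendsto_nhdsGT_zero).const_mul_atTop (by norm_num)
    have h1 : Tendsto (fun m : ℕ => ENNReal.ofReal (4⁻¹ / p m)) atTop (𝓝 ⊤) :=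
      ENNReal.tendsto_ofReal_atTop.comp h2
    exact tendsto_nhds_top_mono h1
      (by filter_upwards [eventually_ge_atTop 1] with m hm using hkey m hm)
end
end

section
/- Let p_i = Λ(K,i,B)/4 (with the truncation convention) for some integer K ≥ 1 and B > 0 with B ≠ 1. Then for all n ≥ m+2 and m large enough, D(m,n) = (1 + o_m(1)) · λ(K−1,m) · (log_{K−1} m)^B · (1/(B−1)) · ( (log_{K−1} m)^{−(B−1)} − (log_{K−1} n)^{−(B−1)} ), where o_m(1) → 0 as m → ∞ uniformly in n. -/
open MeasureTheory Filter Finset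
open scoped ENNReal NNReal Topology

noncomputable section

open NNRW Real

namespace Stmt3Aux

/-- Iterated exponential threshold. -/
def ee : ℕ → ℝ
  | 0 => Real.exp 1
  | k + 1 => Real.exp (ee k)

lemma one_lt_ee (k : ℕ) : 1 < ee k := by
  induction k with
  | zero => simpa [ee] using Real.one_lt_exp_iff_pos.mpr one_pos
  | succ k ih =>
    have : (1:ℝ) < Real.exp (ee k) := by
      have := Real.add_one_le_exp (ee k)
      nlinarith
    simpa [ee] using this

lemma ee_pos (k : ℕ) : 0 < ee k := lt_trans one_pos (one_lt_ee k)

lemma iterLog_ge {k : ℕ} (j : ℕ) (hj : j ≤ k) {x : ℝ} (hx : ee k ≤ x) :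
    ee (k - j) ≤ iterLog j x := by
  induction j with
  | zero => simpa [iterLog] using hx
  | succ j ih =>
    have hj' : j ≤ k := Nat.le_of_succ_le hj
    have h1 : ee (k - j) ≤ iterLog j x := ih hj'
    have h2 : ee (k - j) = Real.exp (ee (k - (j+1))) := by
      have : k - j = (k - (j+1)) + 1 := by omega
      rw [this]; rfl
    have hpos : 0 < iterLog j x := lt_of_lt_of_le (ee_pos _) h1
    have : ee (k - (j+1)) ≤ Real.log (iterLog j x) := by
      rw [← Real.log_exp (ee (k - (j+1)))]
      exact Real.log_le_log (Real.exp_pos _) (h2 ▸ h1)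
    simpa [iterLog] using this

lemma one_lt_iterLog {k j : ℕ} (hj : j ≤ k) {x : ℝ} (hx : ee k ≤ x) :
    1 < iterLog j x :=
  lt_of_lt_of_le (one_lt_ee _) (iterLog_ge j hj hx)

lemma iterLog_pos {k j : ℕ} (hj : j ≤ k) {x : ℝ} (hx : ee k ≤ x) :
    0 < iterLog j x := lt_trans one_pos (one_lt_iterLog hj hx)

lemma one_le_lam {k j : ℕ} (hj : j ≤ k) {x : ℝ} (hx : ee k ≤ x) :
    1 ≤ lam j x := by
  induction j with
  | zero => simp [lam]
  | succ j ih =>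
    have hj' : j ≤ k := Nat.le_of_succ_le hj
    have h1 := ih hj'
    have h2 : 1 ≤ iterLog j x := le_of_lt (one_lt_iterLog hj' hx)
    have : (1:ℝ) ≤ lam j x * iterLog j x := by nlinarith
    simpa [lam] using this

lemma lam_pos {k j : ℕ} (hj : j ≤ k) {x : ℝ} (hx : ee k ≤ x) :
    0 < lam j x := lt_of_lt_of_le one_pos (one_le_lam hj hx)

lemma x_le_lam {k j : ℕ} (hj : 1 ≤ j) (hjk : j ≤ k) {x : ℝ} (hx : ee k ≤ x) :
    x ≤ lam j x := by
  induction j with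
  | zero => omega
  | succ j ih =>
    rcases Nat.eq_zero_or_pos j with h0 | h1
    · subst h0; simp [lam, iterLog]
    · have hj' : j ≤ k := Nat.le_of_succ_le hjk
      have h1' := ih h1 hj'
      have h2 : 1 ≤ iterLog j x := le_of_lt (one_lt_iterLog hj' hx)
      have hxpos : 0 < x := lt_of_lt_of_le (ee_pos k) hx
      have : x ≤ lam j x * iterLog j x := by nlinarith [lam_pos hj' hx]
      simpa [lam] using this


lemma hasDerivAt_iterLog {k j : ℕ} (hj : j ≤ k) {x : ℝ} (hx : ee k ≤ x) :
    HasDerivAt (iterLog j) (1 / lam j x) x := by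
  induction j with
  | zero =>
    have : (fun y : ℝ => iterLog 0 y) = fun y => y := by funext y; rfl
    simpa [this, lam] using (hasDerivAt_id' x)
  | succ j ih =>
    have hj' : j ≤ k := Nat.le_of_succ_le hj
    have h1 := ih hj'
    have hpos : 0 < iterLog j x := iterLog_pos hj' hx
    have h2 : HasDerivAt (fun y => Real.log (iterLog j y))
        ((iterLog j x)⁻¹ * (1 / lam j x)) x :=
      (Real.hasDerivAt_log (ne_of_gt hpos)).comp x h1
    have heq : (fun y => Real.log (iterLog j y)) = iterLog (j+1) := by
      funext y; rfl
    rw [heq] at h2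
    convert h2 using 1
    have hlp : 0 < lam j x := lam_pos hj' hx
    have : lam (j+1) x = lam j x * iterLog j x := rfl
    rw [this]; field_simp

/-- `S j x = ∑_{i=1}^j 1/λ(i,x)`, the logarithmic derivative of `lam j`. -/
def S (j : ℕ) (x : ℝ) : ℝ := ∑ i ∈ Finset.Icc 1 j, 1 / lam i x

lemma S_succ (j : ℕ) (x : ℝ) : S (j+1) x = S j x + 1 / lam (j+1) x := by
  unfold S
  rw [Finset.sum_Icc_succ_top (by omega : 1 ≤ j + 1)]

lemma S_nonneg {k j : ℕ} (hj : j ≤ k) {x : ℝ} (hx : ee k ≤ x) : 0 ≤ S j x :=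
  Finset.sum_nonneg fun i hi => by
    have hik : i ≤ k := le_trans (Finset.mem_Icc.mp hi).2 hj
    exact le_of_lt (div_pos one_pos (lam_pos hik hx))

lemma S_le {k j : ℕ} (hj : j ≤ k) {x : ℝ} (hx : ee k ≤ x) : S j x ≤ j / x := by
  have hxpos : 0 < x := lt_of_lt_of_le (ee_pos k) hx
  have : S j x ≤ ∑ _i ∈ Finset.Icc 1 j, 1 / x := by
    refine Finset.sum_le_sum fun i hi => ?_
    have hi1 := (Finset.mem_Icc.mp hi).1
    have hik : i ≤ k := le_trans (Finset.mem_Icc.mp hi).2 hj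
    have hl := x_le_lam hi1 hik hx
    exact div_le_div_of_nonneg_left one_pos.le hxpos hl
  calc S j x ≤ ∑ _i ∈ Finset.Icc 1 j, 1 / x := this
    _ = j * (1 / x) := by rw [Finset.sum_const, Nat.card_Icc]; simp
    _ = j / x := by ring

lemma hasDerivAt_lam {k j : ℕ} (hj : j ≤ k) {x : ℝ} (hx : ee k ≤ x) :
    HasDerivAt (lam j) (lam j x * S j x) x := by
  induction j with
  | zero =>
    have : (fun y : ℝ => lam 0 y) = fun _ => (1:ℝ) := by funext y; rfl
    simp only [this]
    simpa [lam, S] using (hasDerivAt_const x (1:ℝ))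
  | succ j ih =>
    have hj' : j ≤ k := Nat.le_of_succ_le hj
    have h1 := ih hj'
    have h2 := hasDerivAt_iterLog hj' hx
    have h3 := h1.mul h2
    have heq : (lam j * iterLog j) = lam (j+1) := by funext y; rfl
    rw [heq] at h3
    refine h3.congr_deriv (Eq.symm ?_)
    have hlp : 0 < lam j x := lam_pos hj' hx
    have hLp : 0 < iterLog j x := iterLog_pos hj' hx
    have hl1 : lam (j+1) x = lam j x * iterLog j x := rfl
    rw [S_succ, hl1]
    field_simp

section LamBFacts

variable {K : ℕ} {B : ℝ}

lemma LamB_pos (hK : 1 ≤ K) (hB : 0 < B) {x : ℝ} (hx : ee K ≤ x) :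
    0 < LamB K B x := by
  unfold LamB
  have h1 : 0 ≤ ∑ k ∈ Finset.Icc 1 (K - 1), 1 / lam k x := by
    refine Finset.sum_nonneg fun i hi => ?_
    have hik : i ≤ K := le_trans (Finset.mem_Icc.mp hi).2 (by omega)
    exact le_of_lt (div_pos one_pos (lam_pos hik hx))
  have h2 : 0 < B / lam K x := div_pos hB (lam_pos le_rfl hx)
  linarith

lemma LamB_le (hK : 1 ≤ K) (hB : 0 < B) {x : ℝ} (hx : ee K ≤ x) :
    LamB K B x ≤ (K + B) / x := by
  have hxpos : 0 < x := lt_of_lt_of_le (ee_pos K) hx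
  unfold LamB
  have h1 : (∑ k ∈ Finset.Icc 1 (K - 1), 1 / lam k x) ≤ ∑ _k ∈ Finset.Icc 1 (K-1), 1/x := by
    refine Finset.sum_le_sum fun i hi => ?_
    have hi1 := (Finset.mem_Icc.mp hi).1
    have hik : i ≤ K := le_trans (Finset.mem_Icc.mp hi).2 (by omega)
    exact div_le_div_of_nonneg_left one_pos.le hxpos (x_le_lam hi1 hik hx)
  have h1' : (∑ _k ∈ Finset.Icc 1 (K-1), (1:ℝ)/x) = (K-1 : ℕ) / x := by
    rw [Finset.sum_const, Nat.card_Icc]; simp; ring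
  have h2 : B / lam K x ≤ B / x :=
    div_le_div_of_nonneg_left hB.le hxpos (x_le_lam hK le_rfl hx)
  have h3 : ((K-1:ℕ):ℝ) ≤ (K:ℝ) - 1 + 1 := by
    push_cast [Nat.cast_sub hK]; simp
  have h4 : ((K-1:ℕ):ℝ)/x ≤ K/x := by
    have : ((K-1:ℕ):ℝ) ≤ (K:ℝ) := by
      have := Nat.sub_le K 1; exact_mod_cast Nat.cast_le.mpr this
    exact (div_le_div_iff_of_pos_right hxpos).mpr this
  calc (∑ k ∈ Finset.Icc 1 (K - 1), 1 / lam k x) + B / lam K x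
      ≤ ((K-1:ℕ):ℝ)/x + B/x := by rw [← h1']; exact add_le_add h1 h2
    _ ≤ K/x + B/x := by linarith
    _ = (K + B)/x := by ring

/-- Derivative of `LamB K B`. -/
def DL (K : ℕ) (B : ℝ) (x : ℝ) : ℝ :=
  -((∑ i ∈ Finset.Icc 1 (K - 1), S i x / lam i x) + B * (S K x / lam K x))

lemma hasDerivAt_inv_lam {k j : ℕ} (hj : j ≤ k) {x : ℝ} (hx : ee k ≤ x) :
    HasDerivAt (fun y => 1 / lam j y) (-(S j x / lam j x)) x := by
  have hlp : 0 < lam j x := lam_pos hj hx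
  have h := (hasDerivAt_lam hj hx).inv (ne_of_gt hlp)
  have heq : -(lam j x * S j x) / lam j x ^ 2 = -(S j x / lam j x) := by
    field_simp
  simp only [one_div]
  rw [← heq]; exact h

lemma hasDerivAt_LamB (hK : 1 ≤ K) {B : ℝ} {x : ℝ} (hx : ee K ≤ x) :
    HasDerivAt (LamB K B) (DL K B x) x := by
  have hsum : HasDerivAt (fun y => ∑ i ∈ Finset.Icc 1 (K - 1), 1 / lam i y)
      (∑ i ∈ Finset.Icc 1 (K - 1), -(S i x / lam i x)) x := by
    apply HasDerivAt.fun_sum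
    intro i hi
    exact hasDerivAt_inv_lam (le_trans (Finset.mem_Icc.mp hi).2 (by omega)) hx
  have hK2 : HasDerivAt (fun y => B / lam K y) (B * -(S K x / lam K x)) x := by
    have h := (hasDerivAt_inv_lam le_rfl hx).const_mul B
    have heq : (fun y => B * (1 / lam K y)) = fun y => B / lam K y := by
      funext y; ring
    rw [heq] at h
    exact h
  have h := hsum.add hK2
  have heq : ((fun y => ∑ i ∈ Finset.Icc 1 (K - 1), 1 / lam i y) + fun y => B / lam K y)
      = LamB K B := by funext y; rfl
  rw [heq] at h
  refine h.congr_deriv (Eq.symm ?_)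
  unfold DL
  rw [Finset.sum_neg_distrib]
  ring

lemma abs_DL_le (hK : 1 ≤ K) (hB : 0 < B) {x : ℝ} (hx : ee K ≤ x) :
    |DL K B x| ≤ (K * K + B * K) / x ^ 2 := by
  have hxpos : 0 < x := lt_of_lt_of_le (ee_pos K) hx
  have hterm : ∀ i, 1 ≤ i → i ≤ K → S i x / lam i x ∈ Set.Icc 0 ((K:ℝ) / x ^ 2) := by
    intro i hi1 hik
    have hlp := lam_pos hik hx
    constructor
    · exact div_nonneg (S_nonneg hik hx) hlp.le
    · have h1 : S i x ≤ (K:ℝ) / x := by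
        refine le_trans (S_le hik hx) ?_
        have : (i:ℝ) ≤ (K:ℝ) := by exact_mod_cast hik
        exact (div_le_div_iff_of_pos_right hxpos).mpr this
      have h2 : x ≤ lam i x := x_le_lam hi1 hik hx
      have : S i x / lam i x ≤ ((K:ℝ)/x) / x := by
        apply div_le_div₀ (by positivity) h1 hxpos h2
      calc S i x / lam i x ≤ ((K:ℝ)/x)/x := this
        _ = (K:ℝ)/x^2 := by ring
    
  have hsum : (∑ i ∈ Finset.Icc 1 (K - 1), S i x / lam i x) ∈
      Set.Icc 0 (((K:ℝ) - 1) * ((K:ℝ) / x ^ 2)) := by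
    constructor
    · exact Finset.sum_nonneg fun i hi =>
        (hterm i (Finset.mem_Icc.mp hi).1 (le_trans (Finset.mem_Icc.mp hi).2 (by omega))).1
    · have : (∑ i ∈ Finset.Icc 1 (K - 1), S i x / lam i x) ≤
          ∑ _i ∈ Finset.Icc 1 (K - 1), (K:ℝ) / x ^ 2 :=
        Finset.sum_le_sum fun i hi =>
          (hterm i (Finset.mem_Icc.mp hi).1 (le_trans (Finset.mem_Icc.mp hi).2 (by omega))).2
      refine le_trans this ?_
      rw [Finset.sum_const, Nat.card_Icc]
      have hcast : ((K - 1 + 1 - 1 : ℕ) : ℝ) ≤ (K:ℝ) - 1 := by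
        have : (K - 1 + 1 - 1 : ℕ) = K - 1 := by omega
        rw [this, Nat.cast_sub hK]; simp
      have hKx : (0:ℝ) ≤ (K:ℝ)/x^2 := by positivity
      exact mul_le_mul_of_nonneg_right hcast hKx |>.trans_eq' (by simp [nsmul_eq_mul])
  have hSK := hterm K hK le_rfl
  have hK1 : (1:ℝ) ≤ (K:ℝ) := by exact_mod_cast hK
  rw [DL, abs_neg, abs_of_nonneg (by nlinarith [hsum.1, hSK.1])]
  have ht : (0:ℝ) ≤ (K:ℝ)/x^2 := by positivity
  have hmul : B * (S K x / lam K x) ≤ B * ((K:ℝ)/x^2) :=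
    mul_le_mul_of_nonneg_left hSK.2 hB.le
  have e : ((K:ℝ)-1) * ((K:ℝ)/x^2) + B*((K:ℝ)/x^2)
      = ((K:ℝ)*(K:ℝ) + B*(K:ℝ))/x^2 - (K:ℝ)/x^2 := by ring
  linarith [hsum.2]

lemma LamB_lipschitz (hK : 1 ≤ K) (hB : 0 < B) {a s u : ℝ} (ha : ee K ≤ a)
    (hs : a ≤ s) (hu : a ≤ u) :
    |LamB K B s - LamB K B u| ≤ (K * K + B * K) / a ^ 2 * |s - u| := by
  have hapos : 0 < a := lt_of_lt_of_le (ee_pos K) ha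
  have key : ∀ v w : ℝ, a ≤ v → a ≤ w → v < w →
      |LamB K B w - LamB K B v| ≤ (K * K + B * K) / a ^ 2 * |w - v| := by
    intro v w hv hw hvw
    have hcont : ContinuousOn (LamB K B) (Set.Icc v w) := fun t ht =>
      ((hasDerivAt_LamB hK (le_trans ha (le_trans hv ht.1))).continuousAt).continuousWithinAt
    have hder : ∀ t ∈ Set.Ioo v w, HasDerivAt (LamB K B) (DL K B t) t := fun t ht =>
      hasDerivAt_LamB hK (le_trans ha (le_trans hv ht.1.le))
    obtain ⟨c, hc, hceq⟩ := exists_hasDerivAt_eq_slope (LamB K B) (DL K B) hvw hcont hder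
    have hca : ee K ≤ c := le_trans ha (le_trans hv hc.1.le)
    have hbound : |DL K B c| ≤ (K * K + B * K) / a ^ 2 := by
      refine le_trans (abs_DL_le hK hB hca) ?_
      have hc2 : a ^ 2 ≤ c ^ 2 := by nlinarith [hc.1, hv]
      exact div_le_div_of_nonneg_left (by positivity) (by positivity) hc2
    have : LamB K B w - LamB K B v = DL K B c * (w - v) := by
      rw [eq_div_iff (sub_ne_zero.mpr (ne_of_gt hvw))] at hceq
      linarith [hceq]
    rw [this, abs_mul]
    exact mul_le_mul_of_nonneg_right hbound (abs_nonneg _)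
  rcases lt_trichotomy s u with h | h | h
  · have := key s u hs hu h
    rwa [abs_sub_comm (LamB K B u), abs_sub_comm u] at this
  · rw [h]; simp
  · exact key u s hu hs h

/-- `F K B x = log(λ(K-1,x) · (log_{K-1} x)^B)`, written out. -/
def F (K : ℕ) (B : ℝ) (x : ℝ) : ℝ :=
  (∑ i ∈ Finset.range (K - 1), Real.log (iterLog i x)) + B * Real.log (iterLog (K - 1) x)

lemma lam_eq_prod (j : ℕ) (x : ℝ) : lam j x = ∏ i ∈ Finset.range j, iterLog i x := by
  induction j with
  | zero => simp [lam]
  | succ j ih => rw [Finset.prod_range_succ, ← ih]; rfl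

lemma exp_F (hK : 1 ≤ K) (B : ℝ) {x : ℝ} (hx : ee K ≤ x) :
    Real.exp (F K B x) = lam (K - 1) x * iterLog (K - 1) x ^ B := by
  have hL : 0 < iterLog (K - 1) x := iterLog_pos (by omega) hx
  rw [F, Real.exp_add, Real.exp_sum]
  congr 1
  · rw [lam_eq_prod]
    refine Finset.prod_congr rfl fun i hi => ?_
    have : i ≤ K := by have := Finset.mem_range.mp hi; omega
    exact Real.exp_log (iterLog_pos this hx)
  · rw [Real.rpow_def_of_pos hL]
    ring_nf

lemma hasDerivAt_F (hK : 1 ≤ K) (B : ℝ) {x : ℝ} (hx : ee K ≤ x) :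
    HasDerivAt (F K B) (LamB K B x) x := by
  have hsum : HasDerivAt (fun y => ∑ i ∈ Finset.range (K - 1), Real.log (iterLog i y))
      (∑ i ∈ Finset.range (K - 1), 1 / lam (i + 1) x) x := by
    apply HasDerivAt.fun_sum
    intro i hi
    have hik : i ≤ K := by have := Finset.mem_range.mp hi; omega
    have hik1 : i + 1 ≤ K := by have := Finset.mem_range.mp hi; omega
    have hpos : 0 < iterLog i x := iterLog_pos hik hx
    have h := (Real.hasDerivAt_log (ne_of_gt hpos)).comp x (hasDerivAt_iterLog hik hx)
    refine h.congr_deriv (Eq.symm ?_)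
    have : lam (i + 1) x = lam i x * iterLog i x := rfl
    rw [this]
    have := lam_pos hik hx
    field_simp
  have hBterm : HasDerivAt (fun y => B * Real.log (iterLog (K - 1) y)) (B / lam K x) x := by
    have hK1 : K - 1 ≤ K := by omega
    have hpos : 0 < iterLog (K - 1) x := iterLog_pos hK1 hx
    have h := ((Real.hasDerivAt_log (ne_of_gt hpos)).comp x
      (hasDerivAt_iterLog hK1 hx)).const_mul B
    refine h.congr_deriv (Eq.symm ?_)
    have hKeq : K = (K - 1) + 1 := by omega
    have : lam K x = lam (K - 1) x * iterLog (K - 1) x := by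
      conv_lhs => rw [hKeq]
      rfl
    have hlp := lam_pos hK1 hx
    rw [this]
    rw [div_eq_mul_inv, mul_inv]
    ring
  have h := hsum.add hBterm
  have heq : ((fun y => ∑ i ∈ Finset.range (K - 1), Real.log (iterLog i y))
      + fun y => B * Real.log (iterLog (K - 1) y)) = F K B := by funext y; rfl
  rw [heq] at h
  refine h.congr_deriv (Eq.symm ?_)
  rw [LamB]
  congr 1
  rw [show Finset.Icc 1 (K - 1) = Finset.Ico 1 K by rw [← Finset.Ico_add_one_right_eq_Icc]; congr 1; omega,
    Finset.sum_Ico_eq_sum_range]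
  refine Finset.sum_congr (by congr 1) fun i _ => by rw [Nat.add_comm 1 i]

/-- `g K B x = (log_{K-1} x)^{1-B}/(1-B)`, an antiderivative of `exp (-F K B x)`. -/
def gF (K : ℕ) (B : ℝ) (x : ℝ) : ℝ := iterLog (K - 1) x ^ (1 - B) / (1 - B)

lemma hasDerivAt_gF (hK : 1 ≤ K) {B : ℝ} (hB1 : B ≠ 1) {x : ℝ} (hx : ee K ≤ x) :
    HasDerivAt (gF K B) (Real.exp (-F K B x)) x := by
  have hK1 : K - 1 ≤ K := by omega
  have hL : 0 < iterLog (K - 1) x := iterLog_pos hK1 hx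
  have hlp : 0 < lam (K - 1) x := lam_pos hK1 hx
  have h1 : HasDerivAt (fun y => iterLog (K - 1) y ^ (1 - B))
      ((1 - B) * iterLog (K - 1) x ^ (1 - B - 1) * (1 / lam (K - 1) x)) x :=
    (Real.hasDerivAt_rpow_const (Or.inl (ne_of_gt hL))).comp x (hasDerivAt_iterLog hK1 hx)
  have h2 := h1.div_const (1 - B)
  have heq : (fun y => iterLog (K - 1) y ^ (1 - B) / (1 - B)) = gF K B := by
    funext y; rfl
  rw [heq] at h2
  refine h2.congr_deriv (Eq.symm ?_)
  have hB1' : (1 : ℝ) - B ≠ 0 := sub_ne_zero.mpr (Ne.symm hB1)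
  rw [Real.exp_neg, exp_F hK B hx]
  have e1 : (1 : ℝ) - B - 1 = -B := by ring
  rw [e1, Real.rpow_neg hL.le]
  have hLB : 0 < iterLog (K - 1) x ^ B := Real.rpow_pos_of_pos hL B
  field_simp

lemma U_sandwich {t : ℝ} (h0 : 0 < t) (h1 : t ≤ 1) :
    Real.exp (-t - t^2) ≤ (1 - t/2)/(1 + t/2) ∧
      (1 - t/2)/(1 + t/2) ≤ Real.exp (-t + t^2) := by
  set u := t/2 with hu
  have hu0 : 0 < u := by positivity
  have hu2 : u ≤ 1/2 := by rw [hu]; linarith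
  have h1m : (0:ℝ) < 1 - u := by linarith
  have h1p : (0:ℝ) < 1 + u := by linarith
  have hlog1 : Real.log (1 - u) ≤ -u := by
    have := Real.log_le_sub_one_of_pos h1m; linarith
  have hlog2 : u - u^2 ≤ Real.log (1 + u) := by
    have h := Real.one_sub_inv_le_log_of_pos h1p
    have e : 1 - (1 + u)⁻¹ = u / (1 + u) := by field_simp; ring
    rw [e] at h
    have : u - u^2 ≤ u / (1 + u) := by
      rw [le_div_iff₀ h1p]
      nlinarith
    linarith
  have hlog3 : -u - 2*u^2 ≤ Real.log (1 - u) := by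
    have h := Real.one_sub_inv_le_log_of_pos h1m
    have e : 1 - (1 - u)⁻¹ = -u / (1 - u) := by field_simp; ring
    rw [e] at h
    have : -u - 2*u^2 ≤ -u / (1 - u) := by
      rw [le_div_iff₀ h1m]
      nlinarith
    linarith
  have hlog4 : Real.log (1 + u) ≤ u := by
    have := Real.log_le_sub_one_of_pos h1p; linarith
  have hQ : (0:ℝ) < (1 - u)/(1 + u) := div_pos h1m h1p
  have hlogQ : Real.log ((1 - u)/(1 + u)) = Real.log (1 - u) - Real.log (1 + u) :=
    Real.log_div (ne_of_gt h1m) (ne_of_gt h1p)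
  constructor
  · rw [← Real.exp_log hQ]
    apply Real.exp_le_exp.mpr
    rw [hlogQ]
    have : -t - t^2 = -2*u - 4*u^2 := by rw [hu]; ring
    rw [this]; nlinarith
  · rw [← Real.exp_log hQ]
    apply Real.exp_le_exp.mpr
    rw [hlogQ]
    have : -t + t^2 = -2*u + 4*u^2 := by rw [hu]; ring
    rw [this]; nlinarith

lemma abs_sub_of_sandwich {a b E : ℝ} (hb : 0 < b) (hE : 0 ≤ E)
    (h1 : b * Real.exp (-E) ≤ a) (h2 : a ≤ b * Real.exp E) :
    |a - b| ≤ (Real.exp E - 1) * b := by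
  have hpos : (0:ℝ) < Real.exp E := Real.exp_pos E
  have hneg : Real.exp (-E) = (Real.exp E)⁻¹ := Real.exp_neg E
  have h3 : (1:ℝ) ≤ Real.exp E := by
    rw [← Real.exp_zero]; exact Real.exp_le_exp.mpr hE
  rw [abs_le]
  constructor
  · rw [hneg] at h1
    have key : Real.exp E + (Real.exp E)⁻¹ ≥ 2 := by
      have h4 : (Real.exp E - 1)^2 ≥ 0 := sq_nonneg _
      have h5 : (Real.exp E) * (Real.exp E)⁻¹ = 1 := mul_inv_cancel₀ (ne_of_gt hpos)
      nlinarith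
    nlinarith [mul_le_mul_of_nonneg_left key hb.le]
  · nlinarith

lemma contOn_expF (hK : 1 ≤ K) (B : ℝ) {s : Set ℝ} (hs : ∀ t ∈ s, ee K ≤ t) :
    ContinuousOn (fun t => Real.exp (-F K B t)) s := fun t ht =>
  ((Real.continuous_exp.continuousAt).comp
    ((hasDerivAt_F hK B (hs t ht)).continuousAt.neg)).continuousWithinAt

lemma intervalIntegrable_expF (hK : 1 ≤ K) (B : ℝ) {a b : ℝ} (ha : ee K ≤ a) (hab : a ≤ b) :
    IntervalIntegrable (fun t => Real.exp (-F K B t)) MeasureTheory.volume a b := by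
  apply ContinuousOn.intervalIntegrable
  rw [Set.uIcc_of_le hab]
  exact contOn_expF hK B fun t ht => le_trans ha ht.1

lemma gF_step (hK : 1 ≤ K) {B : ℝ} (hB1 : B ≠ 1) {x : ℝ} (hx : ee K ≤ x) :
    gF K B (x + 1) - gF K B x = ∫ t in x..(x+1), Real.exp (-F K B t) := by
  symm
  apply intervalIntegral.integral_eq_sub_of_hasDerivAt
  · intro t ht
    rw [Set.uIcc_of_le (by linarith : x ≤ x + 1)] at ht
    exact hasDerivAt_gF hK hB1 (le_trans hx ht.1)
  · exact intervalIntegrable_expF hK B hx (by linarith)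

lemma expF_integral_pos (hK : 1 ≤ K) (B : ℝ) {x : ℝ} (hx : ee K ≤ x) :
    0 < ∫ t in x..(x+1), Real.exp (-F K B t) :=
  intervalIntegral.intervalIntegral_pos_of_pos_on
    (intervalIntegrable_expF hK B hx (by linarith))
    (fun t _ => Real.exp_pos _) (by linarith)

lemma step_ratio (hK : 1 ≤ K) {B : ℝ} (hB : 0 < B) {x : ℝ} (hx : ee K + 1 ≤ x) :
    Real.exp (-LamB K B x - (K*K + B*K)/(x-1)^2) * (∫ t in (x-1)..x, Real.exp (-F K B t))
      ≤ (∫ t in x..(x+1), Real.exp (-F K B t)) ∧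
    (∫ t in x..(x+1), Real.exp (-F K B t))
      ≤ Real.exp (-LamB K B x + (K*K + B*K)/(x-1)^2) *
          ∫ t in (x-1)..x, Real.exp (-F K B t) := by
  have hx1 : ee K ≤ x - 1 := by linarith
  set w := (K*K + B*K)/(x-1)^2 with hw
  have key : ∀ t ∈ Set.Icc (x-1) x,
      Real.exp (-LamB K B x - w) * Real.exp (-F K B t) ≤ Real.exp (-F K B (t+1)) ∧
      Real.exp (-F K B (t+1)) ≤ Real.exp (-LamB K B x + w) * Real.exp (-F K B t) := by
    intro t ht
    have h1 : ee K ≤ t := le_trans hx1 ht.1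
    obtain ⟨ζ, hζ, hζeq⟩ := exists_hasDerivAt_eq_slope (F K B) (LamB K B)
      (by linarith : t < t + 1)
      (fun s hs => ((hasDerivAt_F hK B (le_trans h1 hs.1)).continuousAt).continuousWithinAt)
      (fun s hs => hasDerivAt_F hK B (le_trans h1 hs.1.le))
    have hFdiff : F K B (t+1) - F K B t = LamB K B ζ := by
      rw [hζeq]; simp
    have hosc : |LamB K B ζ - LamB K B x| ≤ w := by
      have hζx : ee K ≤ ζ := le_trans h1 hζ.1.le
      have h2 := LamB_lipschitz hK hB hx1 (by linarith [hζ.1, ht.1] : x - 1 ≤ ζ)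
        (by linarith : x - 1 ≤ x)
      have h3 : |ζ - x| ≤ 1 := by
        rw [abs_le]; constructor <;> [linarith [hζ.1, ht.1]; linarith [hζ.2, ht.2]]
      calc |LamB K B ζ - LamB K B x| ≤ (K*K + B*K)/(x-1)^2 * |ζ - x| := h2
        _ ≤ (K*K + B*K)/(x-1)^2 * 1 := by
            apply mul_le_mul_of_nonneg_left h3
            have : (0:ℝ) < x - 1 := by
              have := one_lt_ee K; linarith
            positivity
        _ = w := by rw [hw]; ring
    have e : Real.exp (-F K B (t+1)) = Real.exp (-F K B t) * Real.exp (-(LamB K B ζ)) := by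
      rw [← Real.exp_add]; congr 1; linarith [hFdiff]
    rw [abs_le] at hosc
    constructor
    · rw [e, mul_comm (Real.exp (-LamB K B x - w))]
      exact mul_le_mul_of_nonneg_left
        (Real.exp_le_exp.mpr (by linarith [hosc.1])) (Real.exp_pos _).le
    · rw [e, mul_comm (Real.exp (-LamB K B x + w))]
      exact mul_le_mul_of_nonneg_left
        (Real.exp_le_exp.mpr (by linarith [hosc.2])) (Real.exp_pos _).le
  have h0 := intervalIntegral.integral_comp_add_right (a := x - 1) (b := x)
    (fun t => Real.exp (-F K B t)) 1
  rw [sub_add_cancel] at h0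
  have hInt1 : IntervalIntegrable (fun t => Real.exp (-F K B (t+1)))
      MeasureTheory.volume (x-1) x := by
    apply ContinuousOn.intervalIntegrable
    rw [Set.uIcc_of_le (by linarith : x - 1 ≤ x)]
    have hc : ContinuousOn (fun t : ℝ => t + 1) (Set.Icc (x-1) x) :=
      (continuous_id.add continuous_const).continuousOn
    apply ContinuousOn.comp (contOn_expF hK B (s := Set.Icc x (x+1))
      (fun t ht => by linarith [ht.1, one_lt_ee K])) hc
    intro t ht
    have h1 := ht.1
    have h2 := ht.2
    show t + 1 ∈ Set.Icc x (x+1)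
    exact ⟨by linarith, by linarith⟩
  have hInt2 : IntervalIntegrable (fun t => Real.exp (-F K B t))
      MeasureTheory.volume (x-1) x := intervalIntegrable_expF hK B hx1 (by linarith)
  constructor
  · rw [← h0]
    calc Real.exp (-LamB K B x - w) * ∫ t in (x-1)..x, Real.exp (-F K B t)
        = ∫ t in (x-1)..x, Real.exp (-LamB K B x - w) * Real.exp (-F K B t) := by
          rw [intervalIntegral.integral_const_mul]
      _ ≤ ∫ t in (x-1)..x, Real.exp (-F K B (t+1)) := by
          apply intervalIntegral.integral_mono_on (by linarith : x - 1 ≤ x)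
            (hInt2.const_mul _) hInt1
          exact fun t ht => (key t ht).1
  · rw [← h0]
    calc (∫ t in (x-1)..x, Real.exp (-F K B (t+1)))
        ≤ ∫ t in (x-1)..x, Real.exp (-LamB K B x + w) * Real.exp (-F K B t) := by
          apply intervalIntegral.integral_mono_on (by linarith : x - 1 ≤ x)
            hInt1 (hInt2.const_mul _)
          exact fun t ht => (key t ht).2
      _ = Real.exp (-LamB K B x + w) * ∫ t in (x-1)..x, Real.exp (-F K B t) := by
          rw [intervalIntegral.integral_const_mul]

lemma base_integral (hK : 1 ≤ K) {B : ℝ} (hB : 0 < B) {x : ℝ} (hx : ee K ≤ x) :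
    Real.exp (-F K B x) * Real.exp (-(((K:ℝ) + B)/x)) ≤
      (∫ t in x..(x+1), Real.exp (-F K B t)) ∧
    (∫ t in x..(x+1), Real.exp (-F K B t)) ≤ Real.exp (-F K B x) := by
  have hxpos : 0 < x := lt_of_lt_of_le (ee_pos K) hx
  have key : ∀ t ∈ Set.Icc x (x+1),
      Real.exp (-F K B x) * Real.exp (-(((K:ℝ) + B)/x)) ≤ Real.exp (-F K B t) ∧
      Real.exp (-F K B t) ≤ Real.exp (-F K B x) := by
    intro t ht
    rcases eq_or_lt_of_le ht.1 with h | h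
    · constructor
      · rw [← h]
        have : Real.exp (-(((K:ℝ) + B)/x)) ≤ 1 := by
          rw [show (1:ℝ) = Real.exp 0 by simp]
          apply Real.exp_le_exp.mpr
          have : 0 ≤ ((K:ℝ) + B)/x := by positivity
          linarith
        nlinarith [Real.exp_pos (-F K B x)]
      · rw [← h]
    · obtain ⟨ζ, hζ, hζeq⟩ := exists_hasDerivAt_eq_slope (F K B) (LamB K B) h
        (fun s hs => ((hasDerivAt_F hK B (le_trans hx hs.1)).continuousAt).continuousWithinAt)
        (fun s hs => hasDerivAt_F hK B (le_trans hx hs.1.le))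
      have hζx : ee K ≤ ζ := le_trans hx hζ.1.le
      have hFd : F K B t - F K B x = LamB K B ζ * (t - x) := by
        rw [eq_div_iff (sub_ne_zero.mpr (ne_of_gt h))] at hζeq
        linarith [hζeq]
      have hΛpos := LamB_pos hK hB hζx
      have hΛle : LamB K B ζ ≤ ((K:ℝ) + B)/x := by
        refine le_trans (LamB_le hK hB hζx) ?_
        exact div_le_div_of_nonneg_left (by positivity) hxpos hζ.1.le
      have htx : t - x ≤ 1 := by linarith [ht.2]
      have hd1 : 0 ≤ F K B t - F K B x := by nlinarith [hζ.1]
      have hd2 : F K B t - F K B x ≤ ((K:ℝ) + B)/x := by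
        rw [hFd]
        calc LamB K B ζ * (t - x) ≤ (((K:ℝ) + B)/x) * (t - x) :=
              mul_le_mul_of_nonneg_right hΛle (by linarith [hζ.1])
          _ ≤ (((K:ℝ) + B)/x) * 1 := by
              apply mul_le_mul_of_nonneg_left htx (by positivity)
          _ = ((K:ℝ) + B)/x := by ring
      constructor
      · rw [← Real.exp_add]
        apply Real.exp_le_exp.mpr; linarith
      · apply Real.exp_le_exp.mpr; linarith
  have hInt := intervalIntegrable_expF hK B hx (by linarith : x ≤ x + 1)
  have hIntC : ∀ C : ℝ, IntervalIntegrable (fun _ : ℝ => C) MeasureTheory.volume x (x+1) :=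
    fun C => intervalIntegrable_const
  constructor
  · calc Real.exp (-F K B x) * Real.exp (-(((K:ℝ) + B)/x))
        = ∫ _t in x..(x+1), Real.exp (-F K B x) * Real.exp (-(((K:ℝ) + B)/x)) := by
          rw [intervalIntegral.integral_const]; simp
      _ ≤ ∫ t in x..(x+1), Real.exp (-F K B t) := by
          apply intervalIntegral.integral_mono_on (by linarith : x ≤ x + 1) (hIntC _) hInt
          exact fun t ht => (key t ht).1
  · calc (∫ t in x..(x+1), Real.exp (-F K B t))
        ≤ ∫ _t in x..(x+1), Real.exp (-F K B x) := by
          apply intervalIntegral.integral_mono_on (by linarith : x ≤ x + 1) hInt (hIntC _)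
          exact fun t ht => (key t ht).2
      _ = Real.exp (-F K B x) := by rw [intervalIntegral.integral_const]; simp

lemma sum_inv_sq_le {m : ℕ} (hm : (2:ℝ) ≤ (m:ℝ)) (j : ℕ) :
    ∑ i ∈ Finset.Icc 1 j, (1:ℝ)/(((m:ℝ) + i) - 1)^2 ≤ 1/((m:ℝ) - 1) := by
  have main : ∀ j : ℕ, ∑ i ∈ Finset.Icc 1 j, (1:ℝ)/(((m:ℝ) + i) - 1)^2 ≤
      1/((m:ℝ) - 1) - 1/((m:ℝ) + j - 1) := by
    intro j
    induction j with
    | zero => simp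
    | succ j ih =>
      rw [Finset.sum_Icc_succ_top (by omega : 1 ≤ j + 1)]
      have h1 : ((m:ℝ) + j - 1) > 0 := by
        have : (0:ℝ) ≤ (j:ℕ) := Nat.cast_nonneg j
        push_cast; linarith
      have h2 : ((m:ℝ) + (j+1) - 1) > 0 := by push_cast; linarith
      have step : (1:ℝ)/(((m:ℝ) + (j+1:ℕ)) - 1)^2 ≤
          1/((m:ℝ) + j - 1) - 1/((m:ℝ) + (j+1) - 1) := by
        push_cast
        rw [div_sub_div _ _ (ne_of_gt h1) (ne_of_gt h2)]
        rw [div_le_div_iff₀ (by positivity) (by positivity)]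
        ring_nf
        nlinarith
      have e : ((m:ℝ) + ((j:ℕ):ℝ) + 1 - 1) = ((m:ℝ) + ((j+1:ℕ):ℝ) - 1) := by push_cast; ring
      calc (∑ i ∈ Finset.Icc 1 j, (1:ℝ)/(((m:ℝ) + i) - 1)^2) + (1:ℝ)/(((m:ℝ) + (j+1:ℕ)) - 1)^2
          ≤ (1/((m:ℝ) - 1) - 1/((m:ℝ) + j - 1)) +
            (1/((m:ℝ) + j - 1) - 1/((m:ℝ) + (j+1) - 1)) := by
            apply add_le_add ih
            convert step using 3 <;> push_cast <;> ring
        _ = 1/((m:ℝ) - 1) - 1/((m:ℝ) + (j+1:ℕ) - 1) := by push_cast; ring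
  refine le_trans (main j) ?_
  have : (0:ℝ) < (m:ℝ) + j - 1 := by
    have : (0:ℝ) ≤ (j:ℕ) := Nat.cast_nonneg j
    linarith
  have : 0 ≤ 1/((m:ℝ) + j - 1) := by positivity
  linarith

end LamBFacts

/-- The partial products of `U`. -/
def aSeq (p : ℕ → ℝ) (m : ℕ) (j : ℕ) : ℝ := ∏ i ∈ Finset.Icc 1 j, U p (m + i)

/-- The comparison sequence. -/
def bSeq (K : ℕ) (B : ℝ) (m : ℕ) (j : ℕ) : ℝ :=
  Real.exp (F K B m) * (gF K B ((m:ℝ) + j + 1) - gF K B ((m:ℝ) + j))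

/-- The accumulated error. -/
def cSeq (K : ℕ) (B : ℝ) (m : ℕ) (j : ℕ) : ℝ :=
  ((K:ℝ) + B)/m + ∑ i ∈ Finset.Icc 1 j,
    ((LamB K B ((m:ℝ) + i))^2 + ((K:ℝ)*K + B*K)/(((m:ℝ) + i) - 1)^2)

lemma bSeq_eq {K : ℕ} (hK : 1 ≤ K) {B : ℝ} (hB1 : B ≠ 1) {m : ℕ} (hme : ee K ≤ (m:ℝ))
    (j : ℕ) :
    bSeq K B m j = Real.exp (F K B m) *
      ∫ t in ((m:ℝ)+j)..((m:ℝ)+j+1), Real.exp (-F K B t) := by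
  rw [bSeq, gF_step hK hB1 (le_trans hme (by
    have : (0:ℝ) ≤ (j:ℝ) := Nat.cast_nonneg j
    linarith))]

lemma bSeq_pos {K : ℕ} (hK : 1 ≤ K) {B : ℝ} (hB1 : B ≠ 1) {m : ℕ} (hme : ee K ≤ (m:ℝ))
    (j : ℕ) : 0 < bSeq K B m j := by
  rw [bSeq_eq hK hB1 hme j]
  have hj : (0:ℝ) ≤ (j:ℝ) := Nat.cast_nonneg j
  exact mul_pos (Real.exp_pos _) (expF_integral_pos hK B (by linarith))

lemma cSeq_succ (K : ℕ) (B : ℝ) (m j : ℕ) :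
    cSeq K B m (j+1) = cSeq K B m j +
      ((LamB K B ((m:ℝ) + (j+1:ℕ)))^2 + ((K:ℝ)*K + B*K)/(((m:ℝ) + (j+1:ℕ)) - 1)^2) := by
  rw [cSeq, cSeq, Finset.sum_Icc_succ_top (by omega : 1 ≤ j + 1)]
  ring

lemma key_induction {K : ℕ} (hK : 1 ≤ K) {B : ℝ} (hB : 0 < B) (hB1 : B ≠ 1)
    (p : ℕ → ℝ) (m : ℕ) (hme : ee K ≤ (m:ℝ)) (hmC : (K:ℝ) + B ≤ (m:ℝ))
    (hpeq : ∀ i : ℕ, 1 ≤ i → p (m + i) = LamB K B ((m:ℝ) + i) / 4) (j : ℕ) :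
    Real.exp (-(cSeq K B m j)) * bSeq K B m j ≤ aSeq p m j ∧
      aSeq p m j ≤ Real.exp (cSeq K B m j) * bSeq K B m j := by
  have hmpos : (0:ℝ) < m := lt_of_lt_of_le (ee_pos K) hme
  have hC1pos : (0:ℝ) < (K:ℝ) + B := by
    have : (1:ℝ) ≤ (K:ℝ) := by exact_mod_cast hK
    linarith
  -- facts about Λ at the relevant points
  have hxfacts : ∀ i : ℕ, 1 ≤ i → 0 < LamB K B ((m:ℝ) + i) ∧ LamB K B ((m:ℝ) + i) ≤ 1 := by
    intro i hi
    have hi' : (1:ℝ) ≤ (i:ℝ) := by exact_mod_cast hi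
    have hx : ee K ≤ (m:ℝ) + i := by linarith
    refine ⟨LamB_pos hK hB hx, ?_⟩
    refine le_trans (LamB_le hK hB hx) ?_
    rw [div_le_one (by linarith)]
    linarith
  have hUeq : ∀ i : ℕ, 1 ≤ i → U p (m + i) =
      (1 - LamB K B ((m:ℝ) + i)/2)/(1 + LamB K B ((m:ℝ) + i)/2) := by
    intro i hi
    have hpi := hpeq i hi
    rw [U, hpi]
    have ht := hxfacts i hi
    rw [div_eq_div_iff (by linarith [ht.1]) (by linarith [ht.1])]
    ring
  have hUb : ∀ i : ℕ, 1 ≤ i →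
      Real.exp (-(LamB K B ((m:ℝ) + i)) - (LamB K B ((m:ℝ) + i))^2) ≤ U p (m + i) ∧
      U p (m + i) ≤ Real.exp (-(LamB K B ((m:ℝ) + i)) + (LamB K B ((m:ℝ) + i))^2) := by
    intro i hi
    have ht := hxfacts i hi
    have := U_sandwich ht.1 ht.2
    rw [hUeq i hi]
    exact this
  induction j with
  | zero =>
    have hbase := base_integral hK hB (x := (m:ℝ)) hme
    have ha0 : aSeq p m 0 = 1 := by simp [aSeq]
    have hb0 : bSeq K B m 0 = Real.exp (F K B m) *
        ∫ t in (m:ℝ)..((m:ℝ)+1), Real.exp (-F K B t) := by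
      have := bSeq_eq hK hB1 hme 0
      simpa using this
    have hc0 : cSeq K B m 0 = ((K:ℝ) + B)/m := by simp [cSeq]
    have hexp : Real.exp (F K B m) * Real.exp (-F K B (m:ℝ)) = 1 := by
      rw [← Real.exp_add]; simp
    constructor
    · rw [ha0, hb0, hc0]
      have h1 : Real.exp (F K B m) * (∫ t in (m:ℝ)..((m:ℝ)+1), Real.exp (-F K B t)) ≤ 1 := by
        calc Real.exp (F K B m) * (∫ t in (m:ℝ)..((m:ℝ)+1), Real.exp (-F K B t))
            ≤ Real.exp (F K B m) * Real.exp (-F K B (m:ℝ)) :=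
              mul_le_mul_of_nonneg_left hbase.2 (Real.exp_pos _).le
          _ = 1 := hexp
      have h2 : Real.exp (-(((K:ℝ) + B)/m)) ≤ 1 := by
        rw [show (1:ℝ) = Real.exp 0 by simp]
        apply Real.exp_le_exp.mpr
        have : 0 ≤ ((K:ℝ) + B)/m := by positivity
        linarith
      have hbposint : 0 ≤ Real.exp (F K B m) *
          ∫ t in (m:ℝ)..((m:ℝ)+1), Real.exp (-F K B t) :=
        (mul_pos (Real.exp_pos _) (expF_integral_pos hK B hme)).le
      nlinarith [Real.exp_pos (-(((K:ℝ) + B)/(m:ℝ)))]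
    · rw [ha0, hb0, hc0]
      have h1 : Real.exp (-(((K:ℝ) + B)/m)) ≤
          Real.exp (F K B m) * ∫ t in (m:ℝ)..((m:ℝ)+1), Real.exp (-F K B t) := by
        calc Real.exp (-(((K:ℝ) + B)/m))
            = Real.exp (F K B m) * (Real.exp (-F K B (m:ℝ)) * Real.exp (-(((K:ℝ) + B)/m))) := by
              rw [← mul_assoc, hexp, one_mul]
          _ ≤ Real.exp (F K B m) * ∫ t in (m:ℝ)..((m:ℝ)+1), Real.exp (-F K B t) :=
              mul_le_mul_of_nonneg_left hbase.1 (Real.exp_pos _).le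
      calc (1:ℝ) = Real.exp (((K:ℝ) + B)/m) * Real.exp (-(((K:ℝ) + B)/m)) := by
            rw [← Real.exp_add]; simp
        _ ≤ Real.exp (((K:ℝ) + B)/m) *
            (Real.exp (F K B m) * ∫ t in (m:ℝ)..((m:ℝ)+1), Real.exp (-F K B t)) :=
            mul_le_mul_of_nonneg_left h1 (Real.exp_pos _).le
  | succ j ih =>
    obtain ⟨x, hxdef⟩ : ∃ x : ℝ, x = (m:ℝ) + j + 1 := ⟨_, rfl⟩
    have hjnn : (0:ℝ) ≤ (j:ℝ) := Nat.cast_nonneg j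
    have hxee : ee K + 1 ≤ x := by rw [hxdef]; linarith
    have hxcast : ((m:ℝ) + ((j+1:ℕ):ℝ)) = x := by rw [hxdef]; push_cast; ring
    obtain ⟨t, htdef⟩ : ∃ t : ℝ, t = LamB K B x := ⟨_, rfl⟩
    obtain ⟨w, hwdef⟩ : ∃ w : ℝ, w = ((K:ℝ)*K + B*K)/(x - 1)^2 := ⟨_, rfl⟩
    have hx1 : x - 1 = (m:ℝ) + j := by rw [hxdef]; ring
    -- the step_ratio bounds
    have hsr := step_ratio hK hB hxee
    rw [← htdef, ← hwdef] at hsr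
    -- convert to bSeq
    have hbj : bSeq K B m j = Real.exp (F K B m) *
        ∫ s in (x-1)..x, Real.exp (-F K B s) := by
      rw [bSeq_eq hK hB1 hme j, hx1, hxdef]
    have hbj1 : bSeq K B m (j+1) = Real.exp (F K B m) *
        ∫ s in x..(x+1), Real.exp (-F K B s) := by
      rw [bSeq_eq hK hB1 hme (j+1)]
      rw [hxcast]
    have hem : (0:ℝ) < Real.exp (F K B m) := Real.exp_pos _
    have hb_lower : Real.exp (-t - w) * bSeq K B m j ≤ bSeq K B m (j+1) := by
      rw [hbj, hbj1]
      calc Real.exp (-t - w) * (Real.exp (F K B m) * ∫ s in (x-1)..x, Real.exp (-F K B s))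
          = Real.exp (F K B m) *
            (Real.exp (-t - w) * ∫ s in (x-1)..x, Real.exp (-F K B s)) := by ring
        _ ≤ Real.exp (F K B m) * ∫ s in x..(x+1), Real.exp (-F K B s) :=
            mul_le_mul_of_nonneg_left hsr.1 hem.le
    have hb_upper : bSeq K B m (j+1) ≤ Real.exp (-t + w) * bSeq K B m j := by
      rw [hbj, hbj1]
      calc Real.exp (F K B m) * ∫ s in x..(x+1), Real.exp (-F K B s)
          ≤ Real.exp (F K B m) *
            (Real.exp (-t + w) * ∫ s in (x-1)..x, Real.exp (-F K B s)) :=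
            mul_le_mul_of_nonneg_left hsr.2 hem.le
        _ = Real.exp (-t + w) * (Real.exp (F K B m) * ∫ s in (x-1)..x, Real.exp (-F K B s)) := by
            ring
    have hbjpos : 0 < bSeq K B m j := bSeq_pos hK hB1 hme j
    have hbj1pos : 0 < bSeq K B m (j+1) := bSeq_pos hK hB1 hme (j+1)
    have hUbj := hUb (j+1) (by omega)
    rw [hxcast, ← htdef] at hUbj
    have haeq : aSeq p m (j+1) = aSeq p m j * U p (m + (j+1)) := by
      rw [aSeq, aSeq, Finset.prod_Icc_succ_top (by omega : 1 ≤ j + 1)]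
    have hcsucc : cSeq K B m (j+1) = cSeq K B m j + (t^2 + w) := by
      rw [cSeq_succ, hxcast, ← htdef, ← hwdef]
    have hUpos : 0 < U p (m + (j+1)) :=
      lt_of_lt_of_le (Real.exp_pos _) hUbj.1
    have hajpos : 0 < aSeq p m j :=
      lt_of_lt_of_le (mul_pos (Real.exp_pos _) hbjpos) ih.1
    constructor
    · -- lower bound
      have hbj_ge : Real.exp (t - w) * bSeq K B m (j+1) ≤ bSeq K B m j := by
        have := mul_le_mul_of_nonneg_left hb_upper (Real.exp_pos (t - w)).le
        calc Real.exp (t - w) * bSeq K B m (j+1)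
            ≤ Real.exp (t - w) * (Real.exp (-t + w) * bSeq K B m j) := this
          _ = bSeq K B m j := by
              rw [← mul_assoc, ← Real.exp_add, show (t - w) + (-t + w) = 0 by ring,
                Real.exp_zero, one_mul]
      calc Real.exp (-(cSeq K B m (j+1))) * bSeq K B m (j+1)
          = (Real.exp (-(cSeq K B m j)) * (Real.exp (t - w) * bSeq K B m (j+1))) *
              Real.exp (-t - t^2) := by
            rw [hcsucc, show (Real.exp (-(cSeq K B m j)) * (Real.exp (t - w) * bSeq K B m (j+1))) *
                Real.exp (-t - t^2) = Real.exp (-(cSeq K B m j)) * Real.exp (t - w) *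
                Real.exp (-t - t^2) * bSeq K B m (j+1) from by ring,
              ← Real.exp_add, ← Real.exp_add]
            congr 1
            ring
        _ ≤ (Real.exp (-(cSeq K B m j)) * bSeq K B m j) * Real.exp (-t - t^2) := by
            apply mul_le_mul_of_nonneg_right _ (Real.exp_pos _).le
            exact mul_le_mul_of_nonneg_left hbj_ge (Real.exp_pos _).le
        _ ≤ aSeq p m j * U p (m + (j+1)) := by
            apply mul_le_mul ih.1 hUbj.1 (Real.exp_pos _).le hajpos.le
        _ = aSeq p m (j+1) := haeq.symm
    · -- upper bound
      calc aSeq p m (j+1) = aSeq p m j * U p (m + (j+1)) := haeq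
        _ ≤ (Real.exp (cSeq K B m j) * bSeq K B m j) * Real.exp (-t + t^2) :=
            mul_le_mul ih.2 hUbj.2 hUpos.le (by positivity)
        _ ≤ (Real.exp (cSeq K B m j) * (Real.exp (t + w) * bSeq K B m (j+1))) *
              Real.exp (-t + t^2) := by
            apply mul_le_mul_of_nonneg_right _ (Real.exp_pos _).le
            apply mul_le_mul_of_nonneg_left _ (Real.exp_pos _).le
            calc bSeq K B m j
                = Real.exp (t + w) * (Real.exp (-t - w) * bSeq K B m j) := by
                  rw [← mul_assoc, ← Real.exp_add, show (t + w) + (-t - w) = 0 by ring,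
                    Real.exp_zero, one_mul]
              _ ≤ Real.exp (t + w) * bSeq K B m (j+1) :=
                  mul_le_mul_of_nonneg_left hb_lower (Real.exp_pos _).le
        _ = Real.exp (cSeq K B m (j+1)) * bSeq K B m (j+1) := by
            rw [hcsucc, show (Real.exp (cSeq K B m j) * (Real.exp (t + w) * bSeq K B m (j+1))) *
                Real.exp (-t + t^2) = Real.exp (cSeq K B m j) * Real.exp (t + w) *
                Real.exp (-t + t^2) * bSeq K B m (j+1) from by ring,
              ← Real.exp_add, ← Real.exp_add]
            congr 1
            ring

end Stmt3Aux

open Stmt3Aux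

open NNRW
set_option maxHeartbeats 1600000 in
/-- for `p_i = Λ(K,i,B)/4` (truncation convention) with `B ≠ 1`, uniformly in
`n ≥ m+2`, `D(m,n) = (1+o_m(1)) λ(K-1,m) (log_{K-1} m)^B (1/(B-1))
((log_{K-1} m)^{1-B} - (log_{K-1} n)^{1-B})`. -/
theorem stmt3 (K : ℕ) (hK : 1 ≤ K) (B : ℝ) (hB : 0 < B) (hB1 : B ≠ 1) (p : ℕ → ℝ)
    (hp : ∀ i, 1 ≤ i → 0 ≤ p i ∧ p i < 1 / 2)
    (htr : IsTruncation (fun i : ℕ => LamB K B i / 4) p) :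
    ∀ ε : ℝ, 0 < ε → ∃ M : ℕ, ∀ m : ℕ, M ≤ m → ∀ n : ℕ, m + 2 ≤ n →
      |Dfin p m n -
          lam (K - 1) m * iterLog (K - 1) m ^ B / (B - 1) *
            (iterLog (K - 1) m ^ (1 - B) - iterLog (K - 1) n ^ (1 - B))| ≤
        ε * |lam (K - 1) m * iterLog (K - 1) m ^ B / (B - 1) *
            (iterLog (K - 1) m ^ (1 - B) - iterLog (K - 1) n ^ (1 - B))| := by
  intro ε hε
  obtain ⟨i0, hi01, _h2, _h3, _h4, hi0gt⟩ := htr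
  have hKR : (1:ℝ) ≤ (K:ℝ) := by exact_mod_cast hK
  obtain ⟨C1, hC1def⟩ : ∃ v : ℝ, v = (K:ℝ) + B := ⟨_, rfl⟩
  obtain ⟨C2, hC2def⟩ : ∃ v : ℝ, v = (K:ℝ)*(K:ℝ) + B*(K:ℝ) := ⟨_, rfl⟩
  obtain ⟨CC, hCCdef⟩ : ∃ v : ℝ, v = C1^2 + C2 := ⟨_, rfl⟩
  obtain ⟨Q, hQdef⟩ : ∃ v : ℝ, v = C1 + CC := ⟨_, rfl⟩
  have hC1pos : 0 < C1 := by rw [hC1def]; linarith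
  have hC2pos : 0 < C2 := by rw [hC2def]; nlinarith
  have hCCpos : 0 < CC := by rw [hCCdef]; positivity
  have hQpos : 0 < Q := by rw [hQdef]; positivity
  obtain ⟨ε', hε'def⟩ : ∃ v : ℝ, v = min 1 (ε/3) := ⟨_, rfl⟩
  have hε'pos : 0 < ε' := hε'def ▸ lt_min one_pos (by linarith)
  obtain ⟨M, hM⟩ := exists_nat_ge (max (max (ee K + 2) C1) (max ((i0:ℝ) + 1) (Q/ε' + 2)))
  refine ⟨M, ?_⟩
  intro m hm n hn
  have hmM : (M:ℝ) ≤ (m:ℝ) := by exact_mod_cast hm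
  have hmax1 := le_trans (le_max_left _ _) (le_trans hM hmM)
  have hmax2 := le_trans (le_max_right _ _) (le_trans hM hmM)
  have hmee2 : ee K + 2 ≤ (m:ℝ) := le_trans (le_max_left _ _) hmax1
  have hmC1 : C1 ≤ (m:ℝ) := le_trans (le_max_right _ _) hmax1
  have hmi0R : (i0:ℝ) + 1 ≤ (m:ℝ) := le_trans (le_max_left _ _) hmax2
  have hmQ : Q/ε' + 2 ≤ (m:ℝ) := le_trans (le_max_right _ _) hmax2
  have heK1 : (1:ℝ) < ee K := one_lt_ee K
  have hmee : ee K ≤ (m:ℝ) := by linarith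
  have hm2 : (2:ℝ) ≤ (m:ℝ) := by linarith
  have hm1pos : (0:ℝ) < (m:ℝ) - 1 := by linarith
  have hmi0 : i0 < m := by exact_mod_cast (by linarith : (i0:ℝ) < (m:ℝ))
  have hpeq : ∀ i : ℕ, 1 ≤ i → p (m + i) = LamB K B ((m:ℝ) + i) / 4 := by
    intro i hi
    have := hi0gt (m + i) (by omega)
    rw [this]
    push_cast
    ring_nf
  obtain ⟨E, hEdef⟩ : ∃ v : ℝ, v = C1/(m:ℝ) + CC/((m:ℝ) - 1) := ⟨_, rfl⟩
  have hE0 : 0 ≤ E := by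
    rw [hEdef]
    have : (0:ℝ) < m := by linarith
    positivity
  have hEε' : E ≤ ε' := by
    have h1 : C1/(m:ℝ) ≤ C1/((m:ℝ) - 1) :=
      div_le_div_of_nonneg_left hC1pos.le hm1pos (by linarith)
    have h2 : E ≤ Q/((m:ℝ) - 1) := by
      have e : Q/((m:ℝ) - 1) = C1/((m:ℝ) - 1) + CC/((m:ℝ) - 1) := by rw [hQdef]; ring
      rw [hEdef, e]
      exact add_le_add h1 le_rfl
    refine le_trans h2 ?_
    rw [div_le_iff₀ hm1pos]
    have h3 : Q/ε' + 1 ≤ (m:ℝ) - 1 := by linarith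
    have h4 : Q/ε' ≤ (m:ℝ) - 1 := by linarith
    calc Q = ε' * (Q/ε') := by field_simp
      _ ≤ ε' * ((m:ℝ) - 1) := mul_le_mul_of_nonneg_left h4 hε'pos.le
  have hE1 : E ≤ 1 := le_trans hEε' (hε'def ▸ min_le_left _ _)
  have hEe3 : E ≤ ε/3 := le_trans hEε' (hε'def ▸ min_le_right _ _)
  -- the error accumulations are bounded by E
  have hcE : ∀ j : ℕ, cSeq K B m j ≤ E := by
    intro j
    rw [cSeq, hEdef, hC1def]
    have hsum : ∑ i ∈ Finset.Icc 1 j,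
        ((LamB K B ((m:ℝ) + i))^2 + ((K:ℝ)*(K:ℝ) + B*(K:ℝ))/(((m:ℝ) + i) - 1)^2)
        ≤ CC/((m:ℝ) - 1) := by
      have hterm : ∀ i ∈ Finset.Icc 1 j,
          (LamB K B ((m:ℝ) + i))^2 + ((K:ℝ)*(K:ℝ) + B*(K:ℝ))/(((m:ℝ) + i) - 1)^2
          ≤ CC * ((1:ℝ)/(((m:ℝ) + i) - 1)^2) := by
        intro i hi
        have hi1 : (1:ℝ) ≤ (i:ℝ) := by
          exact_mod_cast (Finset.mem_Icc.mp hi).1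
        have hx : ee K ≤ (m:ℝ) + i := by linarith
        have hxm1 : (0:ℝ) < ((m:ℝ) + i) - 1 := by linarith
        have hxpos : (0:ℝ) < (m:ℝ) + i := by linarith
        have hΛpos := LamB_pos hK hB hx
        have hΛle := LamB_le (B := B) hK hB hx
        rw [hCCdef, hC1def, hC2def]
        have h1 : (LamB K B ((m:ℝ) + i))^2 ≤ (((K:ℝ)+B)/((m:ℝ) + i))^2 :=
          pow_le_pow_left₀ hΛpos.le hΛle 2
        have h2 : (((K:ℝ)+B)/((m:ℝ) + i))^2 ≤ ((K:ℝ)+B)^2/(((m:ℝ) + i) - 1)^2 := by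
          rw [div_pow]
          apply div_le_div_of_nonneg_left (by positivity) (by positivity)
          nlinarith
        have e : (((K:ℝ)+B)^2 + ((K:ℝ)*(K:ℝ) + B*(K:ℝ))) * ((1:ℝ)/(((m:ℝ) + i) - 1)^2)
            = ((K:ℝ)+B)^2/(((m:ℝ) + i) - 1)^2
              + ((K:ℝ)*(K:ℝ) + B*(K:ℝ))/(((m:ℝ) + i) - 1)^2 := by ring
        rw [e]
        linarith
      calc (∑ i ∈ Finset.Icc 1 j,
            ((LamB K B ((m:ℝ) + i))^2 + ((K:ℝ)*(K:ℝ) + B*(K:ℝ))/(((m:ℝ) + i) - 1)^2))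
          ≤ ∑ i ∈ Finset.Icc 1 j, CC * ((1:ℝ)/(((m:ℝ) + i) - 1)^2) :=
            Finset.sum_le_sum hterm
        _ = CC * ∑ i ∈ Finset.Icc 1 j, (1:ℝ)/(((m:ℝ) + i) - 1)^2 := by
            rw [Finset.mul_sum]
        _ ≤ CC * (1/((m:ℝ) - 1)) :=
            mul_le_mul_of_nonneg_left (sum_inv_sq_le hm2 j) hCCpos.le
        _ = CC/((m:ℝ) - 1) := by ring
    exact add_le_add le_rfl hsum
  -- sandwich and per-term absolute bound
  have key := key_induction hK hB hB1 p m hmee (hC1def ▸ hmC1) hpeq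
  have habs : ∀ j : ℕ, |aSeq p m j - bSeq K B m j| ≤
      (Real.exp E - 1) * bSeq K B m j := by
    intro j
    have hbpos := bSeq_pos hK hB1 hmee j
    apply abs_sub_of_sandwich hbpos hE0
    · calc bSeq K B m j * Real.exp (-E)
          = Real.exp (-E) * bSeq K B m j := by ring
        _ ≤ Real.exp (-(cSeq K B m j)) * bSeq K B m j := by
            apply mul_le_mul_of_nonneg_right _ hbpos.le
            exact Real.exp_le_exp.mpr (by linarith [hcE j])
        _ ≤ aSeq p m j := (key j).1
    · calc aSeq p m j ≤ Real.exp (cSeq K B m j) * bSeq K B m j := (key j).2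
        _ ≤ Real.exp E * bSeq K B m j := by
            apply mul_le_mul_of_nonneg_right _ hbpos.le
            exact Real.exp_le_exp.mpr (hcE j)
        _ = bSeq K B m j * Real.exp E := by ring
  -- identify the sums
  have hnm : m ≤ n := by omega
  have hsum_a : Dfin p m n = ∑ j ∈ Finset.range (n - m), aSeq p m j := by
    have hne : n ≠ m := by omega
    rw [Dfin, if_neg hne]
    obtain ⟨N', hN'⟩ : ∃ N', n - m = N' + 1 := ⟨n - m - 1, by omega⟩
    rw [hN', Finset.sum_range_succ']
    have ha0 : aSeq p m 0 = 1 := by simp [aSeq]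
    rw [ha0]
    simp only [Nat.add_sub_cancel]
    rw [show Finset.Icc 1 N' = Finset.Ico 1 (N' + 1) from (Finset.Ico_add_one_right_eq_Icc 1 N').symm,
      Finset.sum_Ico_eq_sum_range]
    simp only [Nat.add_sub_cancel]
    rw [add_comm]
    congr 1
    refine Finset.sum_congr rfl fun i _ => ?_
    rw [Nat.add_comm 1 i]
    rfl
  have hsum_b : ∑ j ∈ Finset.range (n - m), bSeq K B m j =
      Real.exp (F K B m) * (gF K B (n:ℝ) - gF K B (m:ℝ)) := by
    have e1 : ∀ j : ℕ, bSeq K B m j = Real.exp (F K B m) *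
        (gF K B ((m:ℝ) + (j+1:ℕ)) - gF K B ((m:ℝ) + j)) := by
      intro j
      rw [bSeq]
      congr 2
      push_cast
      ring
    calc ∑ j ∈ Finset.range (n - m), bSeq K B m j
        = ∑ j ∈ Finset.range (n - m), Real.exp (F K B m) *
            (gF K B ((m:ℝ) + (j+1:ℕ)) - gF K B ((m:ℝ) + j)) :=
          Finset.sum_congr rfl fun j _ => e1 j
      _ = Real.exp (F K B m) * ∑ j ∈ Finset.range (n - m),
            ((fun j : ℕ => gF K B ((m:ℝ) + j)) (j+1) - (fun j : ℕ => gF K B ((m:ℝ) + j)) j) := by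
          rw [Finset.mul_sum]
      _ = Real.exp (F K B m) * (gF K B ((m:ℝ) + (n - m : ℕ)) - gF K B ((m:ℝ) + (0:ℕ))) := by
          rw [Finset.sum_range_sub (fun j : ℕ => gF K B ((m:ℝ) + j))]
      _ = Real.exp (F K B m) * (gF K B (n:ℝ) - gF K B (m:ℝ)) := by
          rw [show (m:ℝ) + ((n - m : ℕ):ℝ) = (n:ℝ) by
            rw [Nat.cast_sub hnm]; ring]
          norm_num
  obtain ⟨T, hTdef⟩ : ∃ v : ℝ, v = lam (K - 1) (m:ℝ) * iterLog (K - 1) (m:ℝ) ^ B / (B - 1) *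
      (iterLog (K - 1) (m:ℝ) ^ (1 - B) - iterLog (K - 1) (n:ℝ) ^ (1 - B)) := ⟨_, rfl⟩
  rw [← hTdef]
  have hB1' : B - 1 ≠ 0 := sub_ne_zero.mpr hB1
  have hB1'' : 1 - B ≠ 0 := sub_ne_zero.mpr (Ne.symm hB1)
  have hT : T = Real.exp (F K B m) * (gF K B (n:ℝ) - gF K B (m:ℝ)) := by
    rw [hTdef, exp_F hK B hmee, gF, gF]
    field_simp
    ring
  have hTsum : T = ∑ j ∈ Finset.range (n - m), bSeq K B m j := by
    rw [hT, hsum_b]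
  have hTpos : 0 < T := by
    rw [hTsum]
    apply Finset.sum_pos (fun j _ => bSeq_pos hK hB1 hmee j)
    apply Finset.nonempty_range_iff.mpr
    omega
  have hfinal : Real.exp E - 1 ≤ ε := by
    have h1 : Real.exp E ≤ 3 := by
      calc Real.exp E ≤ Real.exp 1 := Real.exp_le_exp.mpr hE1
        _ ≤ 3 := by linarith [Real.exp_one_lt_d9]
    have h2 : Real.exp E - 1 ≤ E * Real.exp E := by
      have h3 := Real.add_one_le_exp (-E)
      have h4 : Real.exp (-E) = (Real.exp E)⁻¹ := Real.exp_neg E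
      have h5 : (0:ℝ) < Real.exp E := Real.exp_pos E
      rw [h4] at h3
      have h6 := mul_le_mul_of_nonneg_right h3 h5.le
      rw [inv_mul_cancel₀ (ne_of_gt h5)] at h6
      nlinarith
    nlinarith [Real.exp_pos E]
  calc |Dfin p m n - T|
      = |∑ j ∈ Finset.range (n - m), (aSeq p m j - bSeq K B m j)| := by
        rw [hsum_a, hTsum, Finset.sum_sub_distrib]
    _ ≤ ∑ j ∈ Finset.range (n - m), |aSeq p m j - bSeq K B m j| :=
        Finset.abs_sum_le_sum_abs _ _
    _ ≤ ∑ j ∈ Finset.range (n - m), (Real.exp E - 1) * bSeq K B m j :=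
        Finset.sum_le_sum fun j _ => habs j
    _ = (Real.exp E - 1) * ∑ j ∈ Finset.range (n - m), bSeq K B m j := by
        rw [Finset.mul_sum]
    _ = (Real.exp E - 1) * T := by rw [← hTsum]
    _ ≤ ε * T := mul_le_mul_of_nonneg_right hfinal hTpos.le
    _ = ε * |T| := by rw [abs_of_pos hTpos]
end
end

section
/- Assume the chain is transient, i.e. D(0,∞) < ∞, and that p_R → 0 as R → ∞. Then for every ε > 0, with probability 1, ξ(R,∞) ≤ 2(1+ε) D(R,∞) log R for all sufficiently large R. -/
open MeasureTheory Filter Finset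
open scoped ENNReal NNReal Topology

noncomputable section

open NNRW

namespace Stmt11Aux

/-- `V p R n m x` : an upper bound recursion for the probability, starting from `x`, that the
walk visits `R` at least `m` times among the next `n` steps. -/
def V (p : ℕ → ℝ) (R : ℕ) : ℕ → ℕ → ℕ → ℝ
  | _, 0, _ => 1
  | 0, _ + 1, _ => 0
  | n + 1, m + 1, x =>
      E p x * V p R n (if x + 1 = R then m else m + 1) (x + 1) +
        (1 - E p x) * V p R n (if x - 1 = R then m else m + 1) (x - 1)

variable {p : ℕ → ℝ} {R : ℕ}

lemma V_zero_m (n x : ℕ) : V p R n 0 x = 1 := by cases n <;> rfl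

lemma V_zero_n (m x : ℕ) : V p R 0 (m + 1) x = 0 := rfl

lemma V_succ (n m x : ℕ) :
    V p R (n + 1) (m + 1) x =
      E p x * V p R n (if x + 1 = R then m else m + 1) (x + 1) +
        (1 - E p x) * V p R n (if x - 1 = R then m else m + 1) (x - 1) := rfl

section Basic

variable (hp : ∀ i, 1 ≤ i → 0 ≤ p i ∧ p i < 1 / 2)
include hp

lemma E_nonneg (x : ℕ) : 0 ≤ E p x := by
  rcases Nat.eq_zero_or_pos x with h | h
  · subst h; simp [E]
  · have := hp x h
    simp only [E, if_neg (Nat.pos_iff_ne_zero.mp h)]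
    linarith [this.1]

lemma E_le_one (x : ℕ) : E p x ≤ 1 := by
  rcases Nat.eq_zero_or_pos x with h | h
  · subst h; simp [E]
  · have := hp x h
    simp only [E, if_neg (Nat.pos_iff_ne_zero.mp h)]
    linarith [this.2]

lemma E_half (x : ℕ) (hx : 1 ≤ x) : 1 / 2 ≤ E p x := by
  have := hp x hx
  simp only [E, if_neg (Nat.pos_iff_ne_zero.mp hx)]
  linarith [this.1]

lemma U_pos (i : ℕ) (hi : 1 ≤ i) : 0 < U p i := by
  have := hp i hi
  exact div_pos (by linarith [this.2]) (by linarith [this.1])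

lemma step_nonneg (i j : ℕ) : 0 ≤ step p i j := by
  unfold step
  split
  · exact E_nonneg hp i
  · split
    · linarith [E_le_one hp i]
    · exact le_rfl

omit hp in
lemma step_succ (i : ℕ) : step p i (i + 1) = E p i := by simp [step]

omit hp in
lemma step_pred (i : ℕ) : step p i (i - 1) = 1 - E p i := by
  rcases Nat.eq_zero_or_pos i with h | h
  · subst h
    simp [step, E]
  · have h1 : i - 1 ≠ i + 1 := by omega
    have h2 : i - 1 + 1 = i := by omega
    simp [step, h1, h2]

omit hp in
lemma step_eq_zero {i j : ℕ} (h1 : j ≠ i + 1) (h2 : j + 1 ≠ i) : step p i j = 0 := by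
  simp [step, h1, h2]

end Basic

/-- `A p R j = ∏_{i=1}^{j} U_{R+i}`. -/
def A (p : ℕ → ℝ) (R j : ℕ) : ℝ := ∏ i ∈ Finset.Icc 1 j, U p (R + i)

variable {p : ℕ → ℝ} {R : ℕ}

lemma A_zero : A p R 0 = 1 := by simp [A]

lemma A_succ (j : ℕ) : A p R (j + 1) = A p R j * U p (R + (j + 1)) :=
  Finset.prod_Icc_succ_top (by omega) _

lemma A_pos (hp : ∀ i, 1 ≤ i → 0 ≤ p i ∧ p i < 1 / 2) (j : ℕ) : 0 < A p R j := by
  refine Finset.prod_pos fun i hi => ?_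
  exact U_pos hp _ (by have := (Finset.mem_Icc.mp hi).1; omega)

lemma A_split (hp : ∀ i, 1 ≤ i → 0 ≤ p i ∧ p i < 1 / 2) (k : ℕ) :
    A p 0 (R + k) = A p 0 R * A p R k := by
  induction k with
  | zero => simp [A_zero]
  | succ k ih =>
      have : R + (k + 1) = (R + k) + 1 := by omega
      rw [this, A_succ, ih, A_succ, zero_add]
      ring

end Stmt11Aux

namespace Stmt11Aux

variable {p : ℕ → ℝ} {R : ℕ}

lemma summable_A0 (hp : ∀ i, 1 ≤ i → 0 ≤ p i ∧ p i < 1 / 2) (htrans : Dinf p 0 < ⊤) :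
    Summable fun j => A p 0 (j + 1) := by
  have h1 : (∑' j : ℕ, ENNReal.ofReal (A p 0 (j + 1))) ≠ ⊤ := by
    intro h
    rw [Dinf] at htrans
    have : (∑' j : ℕ, ENNReal.ofReal (∏ i ∈ Finset.Icc 1 (j + 1), U p (0 + i))) = ⊤ := by
      rw [← h]; rfl
    rw [this] at htrans
    simp at htrans
  have h2 := ENNReal.summable_toReal h1
  refine h2.congr fun j => ?_
  rw [ENNReal.toReal_ofReal (A_pos hp (j + 1)).le]

lemma summable_A (hp : ∀ i, 1 ≤ i → 0 ≤ p i ∧ p i < 1 / 2) (htrans : Dinf p 0 < ⊤) :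
    Summable fun j => A p R (j + 1) := by
  have h0 := summable_A0 hp htrans
  have hsh : Summable fun j => A p 0 (j + R + 1) := by
    have := (summable_nat_add_iff R).mpr h0
    exact this.congr fun j => by ring_nf
  have hsh2 : Summable fun j => A p 0 (j + R + 1) * (A p 0 R)⁻¹ := hsh.mul_right _
  refine hsh2.congr fun j => ?_
  have hsplit := A_split (R := R) hp (j + 1)
  have hne : A p 0 R ≠ 0 := (A_pos hp R).ne'
  have : j + R + 1 = R + (j + 1) := by omega
  rw [this, hsplit]
  field_simp

/-- `G = D(R, ∞)` as a real number. -/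
def G (p : ℕ → ℝ) (R : ℕ) : ℝ := 1 + ∑' j : ℕ, A p R (j + 1)

lemma one_le_G (hp : ∀ i, 1 ≤ i → 0 ≤ p i ∧ p i < 1 / 2) : 1 ≤ G p R := by
  have : 0 ≤ ∑' j : ℕ, A p R (j + 1) := tsum_nonneg fun j => (A_pos hp _).le
  simp only [G]; linarith

lemma Dinf_eq (hp : ∀ i, 1 ≤ i → 0 ≤ p i ∧ p i < 1 / 2) (htrans : Dinf p 0 < ⊤) :
    Dinf p R = ENNReal.ofReal (G p R) := by
  have hs : Summable fun j => A p R (j + 1) := summable_A hp htrans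
  have h1 : (∑' j : ℕ, ENNReal.ofReal (A p R (j + 1))) =
      ENNReal.ofReal (∑' j : ℕ, A p R (j + 1)) :=
    (ENNReal.ofReal_tsum_of_nonneg (fun j => (A_pos hp _).le) hs).symm
  have h2 : Dinf p R = 1 + ∑' j : ℕ, ENNReal.ofReal (A p R (j + 1)) := rfl
  rw [h2, h1, G, ENNReal.ofReal_add (by norm_num) (tsum_nonneg fun j => (A_pos hp _).le)]
  simp

lemma Dfin_R : Dfin p R R = 0 := if_pos rfl

lemma Dfin_sum (x : ℕ) (hx : R < x) :
    Dfin p R x = 1 + ∑ j ∈ Finset.Icc 1 (x - R - 1), A p R j := by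
  rw [Dfin, if_neg (by omega)]
  rfl

lemma Dfin_succ (x : ℕ) (hx : R ≤ x) :
    Dfin p R (x + 1) = Dfin p R x + A p R (x - R) := by
  rcases eq_or_lt_of_le hx with h | h
  · subst h
    rw [Dfin_R, Dfin_sum _ (by omega)]
    simp [A_zero]
  · rw [Dfin_sum _ (by omega), Dfin_sum _ h]
    have h1 : x + 1 - R - 1 = (x - R - 1) + 1 := by omega
    have h2 : x - R - 1 + 1 = x - R := by omega
    rw [h1, Finset.sum_Icc_succ_top (by omega), h2]
    ring

lemma Dfin_nonneg (hp : ∀ i, 1 ≤ i → 0 ≤ p i ∧ p i < 1 / 2) (x : ℕ) : 0 ≤ Dfin p R x := by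
  rcases eq_or_ne x R with h | h
  · simp [h, Dfin_R]
  · rw [Dfin, if_neg h]
    have : 0 ≤ ∑ j ∈ Finset.Icc 1 (x - R - 1), ∏ i ∈ Finset.Icc 1 j, U p (R + i) :=
      Finset.sum_nonneg fun j _ => (A_pos (R := R) hp j).le
    linarith

lemma Dfin_le_G (hp : ∀ i, 1 ≤ i → 0 ≤ p i ∧ p i < 1 / 2) (htrans : Dinf p 0 < ⊤) (x : ℕ) :
    Dfin p R x ≤ G p R := by
  rcases eq_or_ne x R with h | h
  · rw [h, Dfin_R]; linarith [one_le_G (R := R) hp]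
  · rw [Dfin, if_neg h, G]
    have key : ∑ j ∈ Finset.Icc 1 (x - R - 1), ∏ i ∈ Finset.Icc 1 j, U p (R + i)
        ≤ ∑' j : ℕ, A p R (j + 1) := by
      have h1 : ∑ j ∈ Finset.Icc 1 (x - R - 1), ∏ i ∈ Finset.Icc 1 j, U p (R + i)
          = ∑ j ∈ Finset.range (x - R - 1), A p R (j + 1) := by
        have h2 : Finset.Icc 1 (x - R - 1) = Finset.Ico 1 (x - R - 1 + 1) := by
          rw [Finset.Ico_add_one_right_eq_Icc]
        rw [h2, Finset.sum_Ico_eq_sum_range]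
        refine Finset.sum_congr (by congr 1) fun j _ => ?_
        simp [A, Nat.add_comm 1 j]
      rw [h1]
      exact Summable.sum_le_tsum _ (fun j _ => (A_pos hp _).le) (summable_A hp htrans)
    linarith

end Stmt11Aux

namespace Stmt11Aux

variable {p : ℕ → ℝ} {R : ℕ}

/-- Barrier function: probability bound for ever hitting `R` from `x`. -/
def hfun (p : ℕ → ℝ) (R x : ℕ) : ℝ := if x ≤ R then 1 else 1 - Dfin p R x / G p R

/-- Return parameter `ρ = 1 - E_R / D(R,∞)`. -/
def rho (p : ℕ → ℝ) (R : ℕ) : ℝ := 1 - E p R / G p R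

lemma hfun_eq (hp : ∀ i, 1 ≤ i → 0 ≤ p i ∧ p i < 1 / 2) (x : ℕ) (hx : R ≤ x) :
    hfun p R x = 1 - Dfin p R x / G p R := by
  rcases eq_or_lt_of_le hx with h | h
  · subst h; simp [hfun, Dfin_R]
  · rw [hfun, if_neg (by omega)]

lemma hfun_le_one (hp : ∀ i, 1 ≤ i → 0 ≤ p i ∧ p i < 1 / 2) (x : ℕ) : hfun p R x ≤ 1 := by
  rw [hfun]
  split
  · exact le_rfl
  · have h1 : 0 ≤ Dfin p R x := Dfin_nonneg hp x
    have h2 : (0:ℝ) < G p R := by linarith [one_le_G (R := R) hp]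
    have := div_nonneg h1 h2.le
    linarith

lemma hfun_nonneg (hp : ∀ i, 1 ≤ i → 0 ≤ p i ∧ p i < 1 / 2) (htrans : Dinf p 0 < ⊤) (x : ℕ) :
    0 ≤ hfun p R x := by
  rw [hfun]
  split
  · norm_num
  · have h2 : (0:ℝ) < G p R := by linarith [one_le_G (R := R) hp]
    have := div_le_one_of_le₀ (Dfin_le_G hp htrans x) h2.le
    linarith

lemma hfun_R : hfun p R R = 1 := by simp [hfun]

lemma hfun_zero : hfun p R 0 = 1 := by simp [hfun]

lemma rho_nonneg (hp : ∀ i, 1 ≤ i → 0 ≤ p i ∧ p i < 1 / 2) : 0 ≤ rho p R := by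
  have h2 : (0:ℝ) < G p R := by linarith [one_le_G (R := R) hp]
  have h3 : E p R ≤ G p R := le_trans (E_le_one hp R) (one_le_G hp)
  have := (div_le_one h2).mpr h3
  rw [rho]; linarith

lemma rho_le_one (hp : ∀ i, 1 ≤ i → 0 ≤ p i ∧ p i < 1 / 2) : rho p R ≤ 1 := by
  have h2 : (0:ℝ) < G p R := by linarith [one_le_G (R := R) hp]
  have := div_nonneg (E_nonneg hp R) h2.le
  rw [rho]; linarith

lemma harmonic (hp : ∀ i, 1 ≤ i → 0 ≤ p i ∧ p i < 1 / 2) (hR : 1 ≤ R) (x : ℕ)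
    (hx : R + 1 ≤ x) :
    E p x * Dfin p R (x + 1) + (1 - E p x) * Dfin p R (x - 1) = Dfin p R x := by
  have hx1 : 1 ≤ x := by omega
  have hg1 : Dfin p R (x + 1) = Dfin p R x + A p R (x - R) := Dfin_succ x (by omega)
  have hg2 : Dfin p R x = Dfin p R (x - 1) + A p R (x - 1 - R) := by
    have hx2 : R ≤ x - 1 := by omega
    have := Dfin_succ (p := p) (x - 1) hx2
    rw [show x - 1 + 1 = x by omega] at this
    exact this
  have hA : A p R (x - R) = A p R (x - 1 - R) * U p x := by
    have h1 : x - R = (x - 1 - R) + 1 := by omega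
    rw [h1, A_succ]
    congr 2
    omega
  have hE : E p x = 1 / 2 + p x := by rw [E, if_neg (by omega)]
  have hpos : (0:ℝ) < 1 / 2 + p x := by linarith [(hp x hx1).1]
  have hU : (1 / 2 + p x) * U p x = 1 / 2 - p x := by
    rw [U, mul_comm]
    exact div_mul_cancel₀ _ hpos.ne'
  have key : E p x * A p R (x - R) = (1 - E p x) * A p R (x - 1 - R) := by
    rw [hA, hE, ← mul_assoc, mul_comm (1 / 2 + p x) (A p R (x - 1 - R)), mul_assoc, hU]
    ring
  linear_combination E p x * hg1 + (E p x - 1) * hg2 + key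

lemma super_R (hp : ∀ i, 1 ≤ i → 0 ≤ p i ∧ p i < 1 / 2) (hR : 1 ≤ R) :
    E p R * hfun p R (R + 1) + (1 - E p R) * hfun p R (R - 1) = rho p R := by
  have hG : (0:ℝ) < G p R := by linarith [one_le_G (R := R) hp]
  have h1 : Dfin p R (R + 1) = 1 := by
    rw [Dfin_succ R le_rfl, Dfin_R, Nat.sub_self, A_zero]; ring
  have h2 : hfun p R (R + 1) = 1 - 1 / G p R := by
    rw [hfun_eq hp _ (by omega), h1]
  have h3 : hfun p R (R - 1) = 1 := by rw [hfun, if_pos (by omega)]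
  rw [h2, h3, rho]
  field_simp
  ring

lemma super (hp : ∀ i, 1 ≤ i → 0 ≤ p i ∧ p i < 1 / 2) (htrans : Dinf p 0 < ⊤) (hR : 1 ≤ R)
    (x : ℕ) :
    E p x * hfun p R (x + 1) + (1 - E p x) * hfun p R (x - 1) ≤ hfun p R x := by
  have hG : (0:ℝ) < G p R := by linarith [one_le_G (R := R) hp]
  have hE0 : 0 ≤ E p x := E_nonneg hp x
  have hE1 : E p x ≤ 1 := E_le_one hp x
  rcases lt_trichotomy x R with h | h | h
  · have e1 : hfun p R (x + 1) = 1 := by rw [hfun, if_pos (by omega)]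
    have e2 : hfun p R (x - 1) = 1 := by rw [hfun, if_pos (by omega)]
    have e3 : hfun p R x = 1 := by rw [hfun, if_pos (by omega)]
    rw [e1, e2, e3]; ring_nf; exact le_rfl
  · subst h
    rw [super_R hp hR, hfun_R]
    exact rho_le_one hp
  · have e1 : hfun p R (x + 1) = 1 - Dfin p R (x + 1) / G p R := hfun_eq hp _ (by omega)
    have e2 : hfun p R (x - 1) = 1 - Dfin p R (x - 1) / G p R := hfun_eq hp _ (by omega)
    have e3 : hfun p R x = 1 - Dfin p R x / G p R := hfun_eq hp _ (by omega)
    rw [e1, e2, e3]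
    have hh := harmonic hp hR x (by omega)
    have : E p x * (1 - Dfin p R (x + 1) / G p R) + (1 - E p x) * (1 - Dfin p R (x - 1) / G p R)
        = 1 - (E p x * Dfin p R (x + 1) + (1 - E p x) * Dfin p R (x - 1)) / G p R := by
      field_simp
      ring
    rw [this, hh]

lemma V_nonneg (hp : ∀ i, 1 ≤ i → 0 ≤ p i ∧ p i < 1 / 2) :
    ∀ n m x, 0 ≤ V p R n m x ∧ V p R n m x ≤ 1 := by
  intro n
  induction n with
  | zero =>
      intro m x
      cases m with
      | zero => rw [V_zero_m]; norm_num
      | succ m => rw [V_zero_n]; norm_num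
  | succ n ih =>
      intro m x
      cases m with
      | zero => rw [V_zero_m]; norm_num
      | succ m =>
          rw [V_succ]
          have hE0 : 0 ≤ E p x := E_nonneg hp x
          have hE1 : E p x ≤ 1 := E_le_one hp x
          have h1 := ih (if x + 1 = R then m else m + 1) (x + 1)
          have h2 := ih (if x - 1 = R then m else m + 1) (x - 1)
          constructor
          · have := mul_nonneg hE0 h1.1
            have := mul_nonneg (by linarith : (0:ℝ) ≤ 1 - E p x) h2.1
            linarith
          · have a1 : E p x * V p R n (if x + 1 = R then m else m + 1) (x + 1) ≤ E p x * 1 :=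
              mul_le_mul_of_nonneg_left h1.2 hE0
            have a2 : (1 - E p x) * V p R n (if x - 1 = R then m else m + 1) (x - 1)
                ≤ (1 - E p x) * 1 := mul_le_mul_of_nonneg_left h2.2 (by linarith)
            linarith

/-- The key supermartingale estimate: `V n (m+1) x ≤ hfun x * ρ^m`, with the improved
bound `ρ^(m+1)` when starting from `R`. -/
lemma V_le (hp : ∀ i, 1 ≤ i → 0 ≤ p i ∧ p i < 1 / 2) (htrans : Dinf p 0 < ⊤) (hR : 1 ≤ R) :
    ∀ n, (∀ m x, V p R n (m + 1) x ≤ hfun p R x * rho p R ^ m) ∧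
      (∀ m, V p R n (m + 1) R ≤ rho p R ^ (m + 1)) := by
  have hrho0 : 0 ≤ rho p R := rho_nonneg hp
  intro n
  induction n with
  | zero =>
      constructor
      · intro m x
        rw [V_zero_n]
        exact mul_nonneg (hfun_nonneg hp htrans x) (pow_nonneg hrho0 m)
      · intro m
        rw [V_zero_n]
        exact pow_nonneg hrho0 (m + 1)
  | succ n ih =>
      obtain ⟨ih1, ih2⟩ := ih
      have sub : ∀ m y, V p R n (if y = R then m else m + 1) y ≤ hfun p R y * rho p R ^ m := by
        intro m y
        by_cases hy : y = R
        · subst y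
          rw [if_pos rfl]
          cases m with
          | zero => rw [V_zero_m, hfun_R]; norm_num
          | succ m =>
              calc V p R n (m + 1) R ≤ rho p R ^ (m + 1) := ih2 m
                _ = hfun p R R * rho p R ^ (m + 1) := by rw [hfun_R]; ring
        · rw [if_neg hy]; exact ih1 m y
      have main : ∀ m x, V p R (n + 1) (m + 1) x ≤
          (E p x * hfun p R (x + 1) + (1 - E p x) * hfun p R (x - 1)) * rho p R ^ m := by
        intro m x
        rw [V_succ]
        have hE0 : 0 ≤ E p x := E_nonneg hp x
        have hE1 : E p x ≤ 1 := E_le_one hp x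
        have b1 : E p x * V p R n (if x + 1 = R then m else m + 1) (x + 1)
            ≤ E p x * (hfun p R (x + 1) * rho p R ^ m) :=
          mul_le_mul_of_nonneg_left (sub m (x + 1)) hE0
        have b2 : (1 - E p x) * V p R n (if x - 1 = R then m else m + 1) (x - 1)
            ≤ (1 - E p x) * (hfun p R (x - 1) * rho p R ^ m) :=
          mul_le_mul_of_nonneg_left (sub m (x - 1)) (by linarith)
        nlinarith [b1, b2]
      constructor
      · intro m x
        calc V p R (n + 1) (m + 1) x
            ≤ (E p x * hfun p R (x + 1) + (1 - E p x) * hfun p R (x - 1)) * rho p R ^ m :=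
              main m x
          _ ≤ hfun p R x * rho p R ^ m :=
              mul_le_mul_of_nonneg_right (super hp htrans hR x) (pow_nonneg hrho0 m)
      · intro m
        calc V p R (n + 1) (m + 1) R
            ≤ (E p R * hfun p R (R + 1) + (1 - E p R) * hfun p R (R - 1)) * rho p R ^ m :=
              main m R
          _ = rho p R ^ (m + 1) := by rw [super_R hp hR, pow_succ]; ring

lemma V_le_zero (hp : ∀ i, 1 ≤ i → 0 ≤ p i ∧ p i < 1 / 2) (htrans : Dinf p 0 < ⊤)
    (hR : 1 ≤ R) (n m : ℕ) : V p R n (m + 1) 0 ≤ rho p R ^ m := by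
  have := (V_le hp htrans hR n).1 m 0
  rwa [hfun_zero, one_mul] at this

end Stmt11Aux

namespace Stmt11Aux

/-- Extend a path `u` beyond time `t` by the constant value `y`. -/
def pext (u : ℕ → ℕ) (t y : ℕ) : ℕ → ℕ := fun k => if k ≤ t then u k else y

lemma pext_le {u : ℕ → ℕ} {t k : ℕ} (y : ℕ) (hk : k ≤ t) : pext u t y k = u k := if_pos hk

lemma pext_gt {u : ℕ → ℕ} {t k : ℕ} (y : ℕ) (hk : ¬ k ≤ t) : pext u t y k = y := if_neg hk

variable {p : ℕ → ℝ} {R : ℕ} {Ω : Type} [MeasurableSpace Ω] {P : Measure Ω} {X : ℕ → Ω → ℕ}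

lemma key_bound (hp : ∀ i, 1 ≤ i → 0 ≤ p i ∧ p i < 1 / 2) (hX : IsNNWalk P X p 0)
    (hR : 1 ≤ R) :
    ∀ (n m t : ℕ) (u : ℕ → ℕ), u 0 = 0 →
      P {ω | (∀ k ≤ t, X k ω = u k) ∧
          m ≤ ((Finset.Icc (t + 1) (t + n)).filter fun k => X k ω = R).card} ≤
        ENNReal.ofReal ((∏ k ∈ Finset.range t, step p (u k) (u (k + 1))) * V p R n m (u t)) := by
  intro n
  induction n with
  | zero =>
    intro m t u hu
    cases m with
    | zero =>
      have hset : {ω | (∀ k ≤ t, X k ω = u k) ∧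
          0 ≤ ((Finset.Icc (t + 1) (t + 0)).filter fun k => X k ω = R).card} =
            {ω | ∀ k ≤ t, X k ω = u k} := by
        ext ω; simp
      rw [hset, hX.2 t u hu, V_zero_m, mul_one]
    | succ m =>
      have hIcc : Finset.Icc (t + 1) (t + 0) = ∅ := Finset.Icc_eq_empty (by omega)
      have hset : {ω | (∀ k ≤ t, X k ω = u k) ∧
          m + 1 ≤ ((Finset.Icc (t + 1) (t + 0)).filter fun k => X k ω = R).card} =
            (∅ : Set Ω) := by
        ext ω; simp [hIcc]
      rw [hset]
      simp
  | succ n IH =>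
    intro m t u hu
    cases m with
    | zero =>
      rw [V_zero_m, mul_one]
      calc P {ω | (∀ k ≤ t, X k ω = u k) ∧
            0 ≤ ((Finset.Icc (t + 1) (t + (n + 1))).filter fun k => X k ω = R).card}
          ≤ P {ω | ∀ k ≤ t, X k ω = u k} := measure_mono fun ω h => h.1
        _ = ENNReal.ofReal (∏ k ∈ Finset.range t, step p (u k) (u (k + 1))) := hX.2 t u hu
    | succ m =>
      classical
      have hw0 : 0 ≤ ∏ k ∈ Finset.range t, step p (u k) (u (k + 1)) :=
        Finset.prod_nonneg fun k _ => step_nonneg hp _ _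
      set w := ∏ k ∈ Finset.range t, step p (u k) (u (k + 1)) with hw
      set x := u t with hx
      have hsub : {ω | (∀ k ≤ t, X k ω = u k) ∧
          m + 1 ≤ ((Finset.Icc (t + 1) (t + (n + 1))).filter fun k => X k ω = R).card} ⊆
            ⋃ y : ℕ, {ω | (∀ k ≤ t + 1, X k ω = pext u t y k) ∧
              (if y = R then m else m + 1) ≤
                ((Finset.Icc (t + 1 + 1) (t + 1 + n)).filter fun k => X k ω = R).card} := by
        intro ω hω
        refine Set.mem_iUnion.mpr ⟨X (t + 1) ω, ?_, ?_⟩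
        · intro k hk
          rcases Nat.lt_or_ge k (t + 1) with h | h
          · have hk' : k ≤ t := by omega
            rw [pext_le _ hk']
            exact hω.1 k hk'
          · have hk' : k = t + 1 := by omega
            subst hk'
            rw [pext_gt _ (by omega)]
        · have hIcc : Finset.Icc (t + 1) (t + (n + 1)) =
              insert (t + 1) (Finset.Icc (t + 1 + 1) (t + 1 + n)) := by
            ext k
            simp only [Finset.mem_Icc, Finset.mem_insert]
            omega
          have hnm : t + 1 ∉ (Finset.Icc (t + 1 + 1) (t + 1 + n)).filter
              fun k => X k ω = R := by
            simp only [Finset.mem_filter, Finset.mem_Icc]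
            omega
          have h2 := hω.2
          rw [hIcc, Finset.filter_insert] at h2
          by_cases hXy : X (t + 1) ω = R
          · rw [if_pos hXy, Finset.card_insert_of_notMem hnm] at h2
            rw [if_pos hXy]
            omega
          · rw [if_neg hXy] at h2
            rw [if_neg hXy]
            exact h2
      have hAbound : ∀ y : ℕ, P {ω | (∀ k ≤ t + 1, X k ω = pext u t y k) ∧
            (if y = R then m else m + 1) ≤
              ((Finset.Icc (t + 1 + 1) (t + 1 + n)).filter fun k => X k ω = R).card} ≤
          ENNReal.ofReal (w * step p x y *
            V p R n (if y = R then m else m + 1) y) := by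
        intro y
        have h0 : pext u t y 0 = 0 := by rw [pext_le _ (Nat.zero_le t)]; exact hu
        have hIH := IH (if y = R then m else m + 1) (t + 1) (pext u t y) h0
        have hprod : (∏ k ∈ Finset.range (t + 1), step p (pext u t y k) (pext u t y (k + 1)))
            = w * step p x y := by
          rw [Finset.prod_range_succ]
          congr 1
          · rw [hw]
            refine Finset.prod_congr rfl fun k hk => ?_
            have hk' : k < t := Finset.mem_range.mp hk
            rw [pext_le _ (by omega), pext_le _ (by omega)]
          · rw [pext_le _ le_rfl, pext_gt _ (by omega), hx]
        have hut : pext u t y (t + 1) = y := pext_gt _ (by omega)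
        rw [hprod, hut] at hIH
        exact hIH
      have hzero : ∀ y ∉ ({x + 1, x - 1} : Finset ℕ),
          ENNReal.ofReal (w * step p x y * V p R n (if y = R then m else m + 1) y) = 0 := by
        intro y hy
        simp only [Finset.mem_insert, Finset.mem_singleton] at hy
        push_neg at hy
        have hs : step p x y = 0 := step_eq_zero hy.1 fun hcon => hy.2 (by omega)
        rw [hs, mul_zero, zero_mul, ENNReal.ofReal_zero]
      have hVb := V_nonneg (R := R) hp
      have hE0 : 0 ≤ E p x := E_nonneg hp x
      have hE1 : E p x ≤ 1 := E_le_one hp x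
      calc P {ω | (∀ k ≤ t, X k ω = u k) ∧
            m + 1 ≤ ((Finset.Icc (t + 1) (t + (n + 1))).filter fun k => X k ω = R).card}
          ≤ P (⋃ y : ℕ, {ω | (∀ k ≤ t + 1, X k ω = pext u t y k) ∧
              (if y = R then m else m + 1) ≤
                ((Finset.Icc (t + 1 + 1) (t + 1 + n)).filter fun k => X k ω = R).card}) :=
            measure_mono hsub
        _ ≤ ∑' y : ℕ, P {ω | (∀ k ≤ t + 1, X k ω = pext u t y k) ∧
              (if y = R then m else m + 1) ≤
                ((Finset.Icc (t + 1 + 1) (t + 1 + n)).filter fun k => X k ω = R).card} :=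
            measure_iUnion_le _
        _ ≤ ∑' y : ℕ, ENNReal.ofReal (w * step p x y *
              V p R n (if y = R then m else m + 1) y) := ENNReal.tsum_le_tsum hAbound
        _ = ∑ y ∈ ({x + 1, x - 1} : Finset ℕ), ENNReal.ofReal (w * step p x y *
              V p R n (if y = R then m else m + 1) y) := tsum_eq_sum hzero
        _ = ENNReal.ofReal (w * V p R (n + 1) (m + 1) x) := by
            rw [Finset.sum_pair (by omega : x + 1 ≠ x - 1)]
            rw [step_succ, step_pred]
            have ha : 0 ≤ w * E p x * V p R n (if x + 1 = R then m else m + 1) (x + 1) :=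
              mul_nonneg (mul_nonneg hw0 hE0) (hVb n _ _).1
            have hb : 0 ≤ w * (1 - E p x) * V p R n (if x - 1 = R then m else m + 1) (x - 1) :=
              mul_nonneg (mul_nonneg hw0 (by linarith)) (hVb n _ _).1
            rw [← ENNReal.ofReal_add ha hb, V_succ]
            congr 1
            ring

end Stmt11Aux

namespace Stmt11Aux

variable {p : ℕ → ℝ} {R : ℕ} {Ω : Type} [MeasurableSpace Ω] {P : Measure Ω} {X : ℕ → Ω → ℕ}

lemma event_bound (hp : ∀ i, 1 ≤ i → 0 ≤ p i ∧ p i < 1 / 2) (htrans : Dinf p 0 < ⊤)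
    (hX : IsNNWalk P X p 0) (hR : 1 ≤ R) (m : ℕ) :
    P {ω | ∃ n : ℕ, m + 1 ≤ ((Finset.Icc 1 n).filter fun k => X k ω = R).card} ≤
      ENNReal.ofReal (rho p R ^ m) := by
  have hEn : ∀ n : ℕ,
      P {ω | m + 1 ≤ ((Finset.Icc 1 n).filter fun k => X k ω = R).card} ≤
        ENNReal.ofReal (rho p R ^ m) := by
    intro n
    have h := key_bound hp hX hR n (m + 1) 0 (fun _ => 0) rfl
    have hset : {ω | (∀ k ≤ 0, X k ω = (fun _ => 0) k) ∧
        m + 1 ≤ ((Finset.Icc (0 + 1) (0 + n)).filter fun k => X k ω = R).card} =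
          {ω | m + 1 ≤ ((Finset.Icc 1 n).filter fun k => X k ω = R).card} := by
      ext ω
      simp only [Set.mem_setOf_eq, Nat.zero_add, Nat.le_zero]
      constructor
      · exact fun h => h.2
      · refine fun h => ⟨fun k hk => ?_, h⟩
        subst hk
        exact hX.1 ω
    rw [hset] at h
    refine h.trans (ENNReal.ofReal_le_ofReal ?_)
    rw [Finset.range_zero, Finset.prod_empty, one_mul]
    exact V_le_zero hp htrans hR n m
  have hmono : Monotone fun n : ℕ =>
      {ω | m + 1 ≤ ((Finset.Icc 1 n).filter fun k => X k ω = R).card} := by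
    intro a b hab ω hω
    refine le_trans hω (Finset.card_le_card (Finset.filter_subset_filter _ ?_))
    exact Finset.Icc_subset_Icc_right hab
  have hunion : {ω | ∃ n : ℕ, m + 1 ≤ ((Finset.Icc 1 n).filter fun k => X k ω = R).card} =
      ⋃ n : ℕ, {ω | m + 1 ≤ ((Finset.Icc 1 n).filter fun k => X k ω = R).card} := by
    ext ω
    simp only [Set.mem_setOf_eq, Set.mem_iUnion]
  rw [hunion, hmono.measure_iUnion]
  exact iSup_le hEn

lemma localTime_le_of_counts {ω : Ω} (hR : 1 ≤ R) (hX0 : X 0 ω = 0) (m : ℕ)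
    (hcount : ∀ n : ℕ, ((Finset.Icc 1 n).filter fun k => X k ω = R).card ≤ m) :
    localTime X R ω ≤ (m : ℝ≥0∞) := by
  rw [localTime]
  refine Summable.tsum_le_of_sum_le ENNReal.summable fun s => ?_
  set N := s.sup id with hN
  have hsub : s ⊆ Finset.range (N + 1) := by
    intro k hk
    rw [Finset.mem_range]
    have : k ≤ N := Finset.le_sup (f := id) hk
    omega
  have h1 : (∑ k ∈ s, Set.indicator {k | X k ω = R} (fun _ => (1 : ℝ≥0∞)) k) ≤
      ∑ k ∈ Finset.range (N + 1), Set.indicator {k | X k ω = R} (fun _ => (1 : ℝ≥0∞)) k :=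
    Finset.sum_le_sum_of_subset hsub
  have h2 : (∑ k ∈ Finset.range (N + 1), Set.indicator {k | X k ω = R}
      (fun _ => (1 : ℝ≥0∞)) k) =
        (((Finset.range (N + 1)).filter fun k => X k ω = R).card : ℝ≥0∞) := by
    rw [← Finset.sum_boole]
    refine Finset.sum_congr rfl fun k _ => ?_
    rw [Set.indicator_apply]
    simp only [Set.mem_setOf_eq]
  have h3 : ((Finset.range (N + 1)).filter fun k => X k ω = R) ⊆
      ((Finset.Icc 1 (N + 1)).filter fun k => X k ω = R) := by
    intro k hk
    rw [Finset.mem_filter] at hk ⊢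
    refine ⟨Finset.mem_Icc.mpr ⟨?_, by have := Finset.mem_range.mp hk.1; omega⟩, hk.2⟩
    rcases Nat.eq_zero_or_pos k with h | h
    · exfalso
      subst h
      rw [hX0] at hk
      omega
    · exact h
  calc (∑ k ∈ s, Set.indicator {k | X k ω = R} (fun _ => (1 : ℝ≥0∞)) k)
      ≤ (((Finset.range (N + 1)).filter fun k => X k ω = R).card : ℝ≥0∞) := h1.trans h2.le
    _ ≤ (m : ℝ≥0∞) := by
        refine Nat.cast_le.mpr (le_trans (Finset.card_le_card h3) (hcount (N + 1)))

lemma rho_pow_le (hp : ∀ i, 1 ≤ i → 0 ≤ p i ∧ p i < 1 / 2) (hR : 1 ≤ R) {ε : ℝ} (hε : 0 < ε) :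
    rho p R ^ ⌊2 * (1 + ε) * G p R * Real.log R⌋₊ ≤
      Real.exp 1 * (R : ℝ) ^ (-(1 + ε)) := by
  have hG1 : 1 ≤ G p R := one_le_G hp
  have hG0 : (0 : ℝ) < G p R := by linarith
  have hE2 : 1 / 2 ≤ E p R := E_half hp R hR
  have hE1 : E p R ≤ 1 := E_le_one hp R
  set z := E p R / G p R with hz
  have hz0 : 0 < z := div_pos (by linarith) hG0
  have hz1 : z ≤ 1 := (div_le_one hG0).mpr (by linarith)
  have hRR : (1 : ℝ) ≤ (R : ℝ) := by exact_mod_cast hR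
  have hlog : 0 ≤ Real.log R := Real.log_nonneg hRR
  set r := 2 * (1 + ε) * G p R * Real.log R with hr
  have hr0 : 0 ≤ r := by
    have : (0:ℝ) ≤ 2 * (1 + ε) := by linarith
    positivity
  set M := ⌊r⌋₊ with hM
  have hM1 : r - 1 ≤ (M : ℝ) := (Nat.sub_one_lt_floor r).le
  have hrho0 : 0 ≤ rho p R := rho_nonneg hp
  have step1 : rho p R ≤ Real.exp (-z) := by
    have := Real.add_one_le_exp (-z)
    rw [rho, ← hz]
    linarith
  have step2 : rho p R ^ M ≤ Real.exp (-(z * M)) := by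
    calc rho p R ^ M ≤ Real.exp (-z) ^ M := pow_le_pow_left₀ hrho0 step1 M
      _ = Real.exp (-(z * M)) := by
          rw [← Real.exp_nat_mul]
          congr 1
          ring
  have hzr : (1 + ε) * Real.log R ≤ z * r := by
    have hzrq : z * r = 2 * E p R * ((1 + ε) * Real.log R) := by
      rw [hz, hr]
      field_simp
    rw [hzrq]
    nlinarith [mul_nonneg (by linarith : (0:ℝ) ≤ 1 + ε) hlog]
  have hzM : (1 + ε) * Real.log R - 1 ≤ z * M := by
    have h1 : z * (r - 1) ≤ z * M := mul_le_mul_of_nonneg_left hM1 hz0.le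
    nlinarith
  have step3 : Real.exp (-(z * M)) ≤ Real.exp (1 - (1 + ε) * Real.log R) :=
    Real.exp_le_exp.mpr (by linarith)
  have step4 : Real.exp (1 - (1 + ε) * Real.log R) = Real.exp 1 * (R : ℝ) ^ (-(1 + ε)) := by
    rw [Real.exp_sub]
    rw [Real.rpow_def_of_pos (by linarith : (0:ℝ) < (R:ℝ))]
    rw [div_eq_mul_inv, ← Real.exp_neg]
    congr 1
    ring
  calc rho p R ^ M ≤ Real.exp (-(z * M)) := step2
    _ ≤ Real.exp (1 - (1 + ε) * Real.log R) := step3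
    _ = Real.exp 1 * (R : ℝ) ^ (-(1 + ε)) := step4

end Stmt11Aux

open NNRW
/-- for a transient chain with `p_R → 0`, a.s.
`ξ(R,∞) ≤ 2(1+ε) D(R,∞) log R` for all large `R`. -/
theorem stmt11 (p : ℕ → ℝ) (hp : ∀ i, 1 ≤ i → 0 ≤ p i ∧ p i < 1 / 2)
    (htrans : Dinf p 0 < ⊤) (hplim : Tendsto p atTop (𝓝 0))
    (Ω : Type) [MeasurableSpace Ω] (P : Measure Ω) [IsProbabilityMeasure P]
    (X : ℕ → Ω → ℕ) (hX : IsNNWalk P X p 0) :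
    ∀ ε : ℝ, 0 < ε → ∀ᵐ ω ∂P, ∀ᶠ R : ℕ in atTop,
      localTime X R ω ≤
        ENNReal.ofReal (2 * (1 + ε)) * Dinf p R * ENNReal.ofReal (Real.log (R : ℝ)) := by
  intro ε hε
  classical
  set m : ℕ → ℕ := fun R => ⌊2 * (1 + ε) * Stmt11Aux.G p R * Real.log R⌋₊ with hm
  set S : ℕ → Set Ω := fun R =>
    if 1 ≤ R then
      {ω | ∃ n : ℕ, m R + 1 ≤ ((Finset.Icc 1 n).filter fun k => X k ω = R).card}
    else ∅ with hS
  have hbound : ∀ R : ℕ, P (S R) ≤ ENNReal.ofReal (Real.exp 1 * (R : ℝ) ^ (-(1 + ε))) := by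
    intro R
    by_cases hR : 1 ≤ R
    · have hSR : S R = {ω | ∃ n : ℕ,
          m R + 1 ≤ ((Finset.Icc 1 n).filter fun k => X k ω = R).card} := by
        rw [hS]
        simp only [if_pos hR]
      rw [hSR]
      calc P {ω | ∃ n : ℕ, m R + 1 ≤ ((Finset.Icc 1 n).filter fun k => X k ω = R).card}
          ≤ ENNReal.ofReal (Stmt11Aux.rho p R ^ m R) :=
            Stmt11Aux.event_bound hp htrans hX hR (m R)
        _ ≤ ENNReal.ofReal (Real.exp 1 * (R : ℝ) ^ (-(1 + ε))) :=
            ENNReal.ofReal_le_ofReal (Stmt11Aux.rho_pow_le hp hR hε)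
    · have hSR : S R = ∅ := by rw [hS]; simp only [if_neg hR]
      rw [hSR]
      simp
  have hsummable : Summable fun R : ℕ => Real.exp 1 * (R : ℝ) ^ (-(1 + ε)) := by
    have h1 : Summable fun R : ℕ => (R : ℝ) ^ (-(1 + ε)) :=
      Real.summable_nat_rpow.mpr (by linarith)
    exact h1.mul_left _
  have htsum : (∑' R : ℕ, P (S R)) ≠ ⊤ := by
    have h1 : (∑' R : ℕ, P (S R)) ≤
        ∑' R : ℕ, ENNReal.ofReal (Real.exp 1 * (R : ℝ) ^ (-(1 + ε))) :=
      ENNReal.tsum_le_tsum hbound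
    have h2 : (∑' R : ℕ, ENNReal.ofReal (Real.exp 1 * (R : ℝ) ^ (-(1 + ε)))) =
        ENNReal.ofReal (∑' R : ℕ, Real.exp 1 * (R : ℝ) ^ (-(1 + ε))) := by
      refine (ENNReal.ofReal_tsum_of_nonneg (fun R => ?_) hsummable).symm
      have : (0:ℝ) ≤ (R : ℝ) ^ (-(1 + ε)) := Real.rpow_nonneg (Nat.cast_nonneg R) _
      positivity
    rw [h2] at h1
    exact ne_top_of_le_ne_top ENNReal.ofReal_ne_top h1
  have hBC := MeasureTheory.ae_eventually_notMem htsum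
  filter_upwards [hBC] with ω hω
  have hev : ∀ᶠ R : ℕ in atTop, 1 ≤ R ∧ ω ∉ S R := (eventually_ge_atTop 1).and hω
  refine hev.mono fun R hR' => ?_
  obtain ⟨hR, hωS⟩ := hR'
  have hGR1 : 1 ≤ Stmt11Aux.G p R := Stmt11Aux.one_le_G hp
  have hRR : (1 : ℝ) ≤ (R : ℝ) := by exact_mod_cast hR
  have hlog : 0 ≤ Real.log R := Real.log_nonneg hRR
  have h2e : (0:ℝ) ≤ 2 * (1 + ε) := by linarith
  have hr0 : 0 ≤ 2 * (1 + ε) * Stmt11Aux.G p R * Real.log R :=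
    mul_nonneg (mul_nonneg h2e (by linarith)) hlog
  have hcount : ∀ n : ℕ, ((Finset.Icc 1 n).filter fun k => X k ω = R).card ≤ m R := by
    intro n
    by_contra hcon
    refine hωS ?_
    have hSR : S R = {ω | ∃ n : ℕ,
        m R + 1 ≤ ((Finset.Icc 1 n).filter fun k => X k ω = R).card} := by
      rw [hS]
      simp only [if_pos hR]
    rw [hSR]
    exact ⟨n, by omega⟩
  have h1 : localTime X R ω ≤ (m R : ℝ≥0∞) :=
    Stmt11Aux.localTime_le_of_counts hR (hX.1 ω) (m R) hcount
  refine h1.trans ?_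
  have h2 : ((m R : ℕ) : ℝ≥0∞) = ENNReal.ofReal ((m R : ℕ) : ℝ) :=
    (ENNReal.ofReal_natCast _).symm
  rw [h2]
  calc ENNReal.ofReal ((m R : ℕ) : ℝ)
      ≤ ENNReal.ofReal (2 * (1 + ε) * Stmt11Aux.G p R * Real.log R) :=
        ENNReal.ofReal_le_ofReal (Nat.floor_le hr0)
    _ = ENNReal.ofReal (2 * (1 + ε)) * ENNReal.ofReal (Stmt11Aux.G p R) *
          ENNReal.ofReal (Real.log R) := by
        rw [ENNReal.ofReal_mul (mul_nonneg h2e (by linarith)), ENNReal.ofReal_mul h2e]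
    _ = ENNReal.ofReal (2 * (1 + ε)) * Dinf p R * ENNReal.ofReal (Real.log (R : ℝ)) := by
        rw [Stmt11Aux.Dinf_eq hp htrans]
end
end
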